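/- arXiv:1105.6022 — 2 statements merged into one kernel-verified Lean document; each statement's English description precedes it below -/
import Mathlib

section
/- Let 1 < q < ∞ and α > 0. There exists a constant C = C(n, q, α) > 0 such that for every z ∈ ℝⁿ with z ≠ 0, ( ∫₀^∞ |t^α ∇_z ∂_t^α p_t(z)|^q dt/t )^{1/q} ≤ C · |z|^{−(n+1)}, where ∇_z denotes the gradient in the z-variable and |·| its Euclidean norm. -/
open MeasureTheory Set
open scoped ENNReal

/-- The Poisson kernel of the upper half-space `ℝ^{n+1}_+`:
`p_t(x) = Γ((n+1)/2) π^{−(n+1)/2} t (t² + |x|²)^{−(n+1)/2}`. -/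
noncomputable def halfSpacePoissonKernel (n : ℕ) (t : ℝ) (x : EuclideanSpace ℝ (Fin n)) : ℝ :=
  Real.Gamma (((n : ℝ) + 1) / 2) / Real.pi ^ (((n : ℝ) + 1) / 2) *
    (t * (t ^ 2 + ‖x‖ ^ 2) ^ (-(((n : ℝ) + 1) / 2)))

/-- The smallest integer strictly greater than `α` (for `α ≥ 0`). -/
noncomputable def mOf (α : ℝ) : ℕ := ⌊α⌋₊ + 1

/-- The fractional derivative in `t` of the Poisson kernel, of order `α > 0`, with `m` the
smallest integer strictly exceeding `α`:
`∂_t^α p_t(x) = (e^{−iπ(m−α)}/Γ(m−α)) ∫₀^∞ ∂_t^m p_{t+s}(x) s^{m−α−1} ds`. -/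
noncomputable def fracKernel (n : ℕ) (α : ℝ) (t : ℝ) (x : EuclideanSpace ℝ (Fin n)) : ℂ :=
  Complex.exp ((↑(-(Real.pi * ((mOf α : ℝ) - α))) : ℂ) * Complex.I) /
      (Real.Gamma ((mOf α : ℝ) - α) : ℂ) *
    ((∫ s in Ioi (0 : ℝ),
        iteratedDeriv (mOf α) (fun r => halfSpacePoissonKernel n r x) (t + s) *
          s ^ ((mOf α : ℝ) - α - 1) : ℝ) : ℂ)

/-- `∂_t^α P_t f(x) = ∫_{ℝⁿ} ∂_t^α p_t(x−y) f(y) dy` for a `B`-valued `f`. -/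
noncomputable def fracPoisson (n : ℕ) {B : Type*} [NormedAddCommGroup B] [NormedSpace ℂ B]
    (α t : ℝ) (f : EuclideanSpace ℝ (Fin n) → B) (x : EuclideanSpace ℝ (Fin n)) : B :=
  ∫ y, fracKernel n α t (x - y) • f y

/-- The fractional Littlewood–Paley `g`-function
`g_α^q(f)(x) = (∫₀^∞ ‖t^α ∂_t^α P_t f(x)‖_B^q dt/t)^{1/q}`, with values in `[0,∞]`. -/
noncomputable def gFun (n : ℕ) {B : Type*} [NormedAddCommGroup B] [NormedSpace ℂ B]
    (q α : ℝ) (f : EuclideanSpace ℝ (Fin n) → B) (x : EuclideanSpace ℝ (Fin n)) : ℝ≥0∞ :=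
  (∫⁻ t in Ioi (0 : ℝ),
      ENNReal.ofReal (‖t ^ α • fracPoisson n α t f x‖ ^ q / t)) ^ (1 / q)

/-- The fractional area function
`S_α^q(f)(x) = (∬_{|x−y|<t} ‖t^α ∂_t^α P_t f(y)‖_B^q dy dt/t^{n+1})^{1/q}`,
with values in `[0,∞]`. -/
noncomputable def areaFun (n : ℕ) {B : Type*} [NormedAddCommGroup B] [NormedSpace ℂ B]
    (q α : ℝ) (f : EuclideanSpace ℝ (Fin n) → B) (x : EuclideanSpace ℝ (Fin n)) : ℝ≥0∞ :=
  (∫⁻ t in Ioi (0 : ℝ), ∫⁻ y in {y | ‖x - y‖ < t},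
      ENNReal.ofReal (‖t ^ α • fracPoisson n α t f y‖ ^ q / t ^ (n + 1))) ^ (1 / q)

/-- The fractional `g*_λ`-function
`g_{λ,α}^{q,*}(f)(x) = (∬_{ℝⁿ×(0,∞)} (t/(t+|x−y|))^{λn} ‖t^α ∂_t^α P_t f(y)‖_B^q
dy dt/t^{n+1})^{1/q}`, with values in `[0,∞]`. -/
noncomputable def gStarFun (n : ℕ) {B : Type*} [NormedAddCommGroup B] [NormedSpace ℂ B]
    (q α lam : ℝ) (f : EuclideanSpace ℝ (Fin n) → B) (x : EuclideanSpace ℝ (Fin n)) : ℝ≥0∞ :=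
  (∫⁻ t in Ioi (0 : ℝ), ∫⁻ y,
      ENNReal.ofReal ((t / (t + ‖x - y‖)) ^ (lam * n) *
        ‖t ^ α • fracPoisson n α t f y‖ ^ q / t ^ (n + 1))) ^ (1 / q)

set_option maxHeartbeats 2000000

namespace Stmt7

/-- Structural representation of iterated `r`-derivatives of `r ↦ K r (r²+a)^{-β}`:
sums of monomials `c rⁱ aʲ (r²+a)^{-(β+m)}` with exact weighted degree `i+2j = m+1`. -/
inductive Rep (β : ℝ) : ℕ → (ℝ → ℝ → ℝ) → Prop
  | mono (m i j : ℕ) (c : ℝ) (h : c = 0 ∨ i + 2*j = m + 1) :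
      Rep β m (fun r a => c * r^i * a^j * (r^2+a) ^ (-(β + (m:ℝ))))
  | add {m : ℕ} {F G : ℝ → ℝ → ℝ} : Rep β m F → Rep β m G →
      Rep β m (fun r a => F r a + G r a)

lemma rep_deriv {β : ℝ} {m : ℕ} {F} (hF : Rep β m F) :
    ∃ F', Rep β (m+1) F' ∧ ∀ a : ℝ, 0 < a → ∀ r : ℝ, 0 < r →
      HasDerivAt (fun r => F r a) (F' r a) r := by
  induction hF with
  | mono i j c h =>
      refine ⟨fun r a => ((c*i) * r^(i+1) * a^j * (r^2+a) ^ (-(β + ((m+1:ℕ):ℝ))) +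
          (c*i) * r^(i-1) * a^(j+1) * (r^2+a) ^ (-(β + ((m+1:ℕ):ℝ)))) +
          ((-2)*c*(β+(m:ℝ))) * r^(i+1) * a^j * (r^2+a) ^ (-(β + ((m+1:ℕ):ℝ))), ?_, ?_⟩
      · refine Rep.add (Rep.add (Rep.mono _ _ _ _ ?_) (Rep.mono _ _ _ _ ?_))
          (Rep.mono _ _ _ _ ?_)
        · rcases h with h | h
          · exact Or.inl (by simp [h])
          · exact Or.inr (by omega)
        · rcases Nat.eq_zero_or_pos i with hi | hi
          · exact Or.inl (by simp [hi])
          · rcases h with h | h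
            · exact Or.inl (by simp [h])
            · exact Or.inr (by omega)
        · rcases h with h | h
          · exact Or.inl (by simp [h])
          · exact Or.inr (by omega)
      · intro a ha r hr
        have hs : (0:ℝ) < r^2 + a := by positivity
        have hinner : HasDerivAt (fun r : ℝ => r^2 + a) (2*r) r := by
          simpa using (hasDerivAt_pow 2 r).add_const a
        have houter : HasDerivAt (fun r : ℝ => (r^2+a) ^ (-(β + (m:ℝ))))
            ((-(β + (m:ℝ))) * (r^2+a) ^ (-(β + (m:ℝ)) - 1) * (2*r)) r := by
          exact (Real.hasDerivAt_rpow_const (Or.inl hs.ne')).comp r hinner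
        have h1 : HasDerivAt (fun r : ℝ => c * r^i * a^j)
            (c * ((i:ℝ) * r^(i-1)) * a^j) r :=
          ((hasDerivAt_pow i r).const_mul c).mul_const (a^j)
        have h2 : HasDerivAt (fun r : ℝ => c * r^i * a^j * (r^2+a) ^ (-(β + (m:ℝ)))) _ r :=
          h1.mul houter
        convert h2 using 1
        have hsub : (-(β + ((m+1:ℕ):ℝ))) = -(β + (m:ℝ)) - 1 := by push_cast; ring
        rw [hsub]
        have hfac : (r^2+a) ^ (-(β + (m:ℝ))) = (r^2+a) ^ (-(β + (m:ℝ)) - 1) * (r^2+a) := by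
          rw [← Real.rpow_add_one hs.ne']; ring_nf
        rw [hfac]
        show (_ : ℝ) + _ + _ = _
        rcases Nat.eq_zero_or_pos i with hi | hi
        · subst hi; push_cast; ring
        · obtain ⟨k, rfl⟩ : ∃ k, i = k + 1 := ⟨i-1, by omega⟩
          simp only [Nat.add_sub_cancel]
          push_cast; ring
  | add hF hG ihF ihG =>
      obtain ⟨F', hF', hdF⟩ := ihF
      obtain ⟨G', hG', hdG⟩ := ihG
      exact ⟨fun r a => F' r a + G' r a, Rep.add hF' hG',
        fun a ha r hr => (hdF a ha r hr).add (hdG a ha r hr)⟩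

lemma mono_prod_le {r a : ℝ} (hr : 0 < r) (ha : 0 < a) (i j : ℕ) :
    r^i * a^j ≤ (r^2+a) ^ (((i:ℝ) + 2*j)/2) := by
  have hs : (0:ℝ) < r^2+a := by positivity
  have h1 : r^i ≤ (r^2+a) ^ ((i:ℝ)/2) := by
    have e1 : (r^2) ^ ((i:ℝ)/2) = r ^ (i:ℕ) := by
      rw [show r^2 = r ^ ((2:ℕ):ℝ) by rw [Real.rpow_natCast], ← Real.rpow_mul hr.le,
        show ((2:ℕ):ℝ) * ((i:ℝ)/2) = (i:ℝ) by push_cast; ring, Real.rpow_natCast]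
    calc r^i = (r^2)^((i:ℝ)/2) := e1.symm
      _ ≤ (r^2+a)^((i:ℝ)/2) := Real.rpow_le_rpow (sq_nonneg r) (by linarith) (by positivity)
  have h2 : a^j ≤ (r^2+a) ^ ((j:ℝ)) := by
    calc a^j = a ^ ((j:ℝ)) := (Real.rpow_natCast a j).symm
      _ ≤ (r^2+a) ^ ((j:ℝ)) := Real.rpow_le_rpow ha.le (by nlinarith [sq_nonneg r]) (by positivity)
  calc r^i * a^j ≤ (r^2+a)^((i:ℝ)/2) * (r^2+a)^((j:ℝ)) :=
        mul_le_mul h1 h2 (by positivity) (by positivity)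
    _ = (r^2+a) ^ (((i:ℝ)+2*j)/2) := by
        rw [← Real.rpow_add hs]; congr 1; push_cast; ring

lemma rep_bound {β : ℝ} {m : ℕ} {F} (hF : Rep β m F) :
    ∃ C, 0 ≤ C ∧ ∀ r : ℝ, 0 < r → ∀ a : ℝ, 0 < a →
      |F r a| ≤ C * (r^2+a) ^ (((m:ℝ)+1)/2 - (β+m)) := by
  induction hF with
  | mono i j c h =>
    refine ⟨|c|, abs_nonneg c, fun r hr a ha => ?_⟩
    have hs : (0:ℝ) < r^2+a := by positivity
    rcases h with hc | h
    · subst hc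
      simp only [zero_mul, abs_zero]
      positivity
    · have key := mono_prod_le hr ha i j
      have hdeg : ((i:ℝ) + 2*j)/2 = ((m:ℝ)+1)/2 := by
        have := congrArg (fun k : ℕ => (k:ℝ)) h; push_cast at this; linarith
      calc |c * r^i * a^j * (r^2+a) ^ (-(β+(m:ℝ)))|
          = |c| * (r^i * a^j * (r^2+a) ^ (-(β+(m:ℝ)))) := by
            rw [abs_mul, abs_mul, abs_mul, abs_of_pos (pow_pos hr i), abs_of_pos (pow_pos ha j),
              abs_of_pos (Real.rpow_pos_of_pos hs _)]; ring
        _ ≤ |c| * ((r^2+a) ^ (((m:ℝ)+1)/2) * (r^2+a) ^ (-(β+(m:ℝ)))) := by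
            refine mul_le_mul_of_nonneg_left ?_ (abs_nonneg c)
            refine mul_le_mul_of_nonneg_right ?_ (Real.rpow_nonneg hs.le _)
            rw [← hdeg]; exact key
        _ = |c| * (r^2+a) ^ (((m:ℝ)+1)/2 - (β+m)) := by
            rw [← Real.rpow_add hs, ← sub_eq_add_neg]
  | add hF hG ihF ihG =>
    obtain ⟨C₁, hC₁, h₁⟩ := ihF
    obtain ⟨C₂, hC₂, h₂⟩ := ihG
    refine ⟨C₁ + C₂, by linarith, fun r hr a ha => ?_⟩
    calc |_ + _| ≤ |_| + |_| := abs_add_le _ _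
      _ ≤ C₁ * (r^2+a) ^ (((m:ℝ)+1)/2 - (β+m)) + C₂ * (r^2+a) ^ (((m:ℝ)+1)/2 - (β+m)) :=
          add_le_add (h₁ r hr a ha) (h₂ r hr a ha)
      _ = (C₁ + C₂) * (r^2+a) ^ (((m:ℝ)+1)/2 - (β+m)) := by ring

lemma rep_deriv_a {β : ℝ} {m : ℕ} {F} (hF : Rep β m F) :
    ∃ (C : ℝ) (F' : ℝ → ℝ → ℝ), 0 ≤ C ∧
      (∀ r : ℝ, 0 < r → ∀ a : ℝ, 0 < a → HasDerivAt (fun a => F r a) (F' r a) a) ∧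
      (∀ r : ℝ, 0 < r → ∀ a : ℝ, 0 < a →
        |F' r a| ≤ C * (r^2+a) ^ (((m:ℝ)-1)/2 - (β+m))) := by
  induction hF with
  | mono i j c h =>
    refine ⟨|c| * j + |c| * |β+(m:ℝ)|,
      fun r a => c * r^i * ((j:ℝ) * a^(j-1)) * (r^2+a) ^ (-(β+(m:ℝ))) +
        c * r^i * a^j * ((-(β+(m:ℝ))) * (r^2+a) ^ (-(β+(m:ℝ)) - 1)),
      by positivity, fun r hr a ha => ?_, fun r hr a ha => ?_⟩
    · have hs : (0:ℝ) < r^2+a := by positivity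
      have hinner : HasDerivAt (fun a : ℝ => r^2 + a) 1 a := by
        simpa using (hasDerivAt_id a).const_add (r^2)
      have houter : HasDerivAt (fun a : ℝ => (r^2+a) ^ (-(β+(m:ℝ))))
          ((-(β+(m:ℝ))) * (r^2+a) ^ (-(β+(m:ℝ)) - 1) * 1) a :=
        (Real.hasDerivAt_rpow_const (Or.inl hs.ne')).comp a hinner
      have h1 : HasDerivAt (fun a : ℝ => c * r^i * a^j)
          (c * r^i * ((j:ℝ) * a^(j-1))) a := (hasDerivAt_pow j a).const_mul (c * r^i)
      have h2 : HasDerivAt (fun a : ℝ => c * r^i * a^j * (r^2+a) ^ (-(β+(m:ℝ)))) _ a :=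
        h1.mul houter
      convert h2 using 1
      ring
    · have hs : (0:ℝ) < r^2+a := by positivity
      rcases h with hc | h
      · subst hc
        simp only [zero_mul, mul_zero, add_zero, abs_zero]
        positivity
      · have hb1 : |c * r^i * ((j:ℝ) * a^(j-1)) * (r^2+a) ^ (-(β+(m:ℝ)))|
            ≤ |c| * j * (r^2+a) ^ (((m:ℝ)-1)/2 - (β+m)) := by
          rcases Nat.eq_zero_or_pos j with hj | hj
          · subst hj; simp
          · obtain ⟨l, rfl⟩ : ∃ l, j = l + 1 := ⟨j-1, by omega⟩
            have key := mono_prod_le hr ha i l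
            have hdeg : ((i:ℝ) + 2*l)/2 = ((m:ℝ)-1)/2 := by
              have := congrArg (fun k : ℕ => (k:ℝ)) h; push_cast at this; linarith
            have e1 : |c * r^i * (((l+1:ℕ):ℝ) * a^((l+1)-1)) * (r^2+a) ^ (-(β+(m:ℝ)))|
                = |c| * ((l:ℝ)+1) * (r^i * a^l * (r^2+a) ^ (-(β+(m:ℝ)))) := by
              simp only [Nat.add_sub_cancel]
              rw [abs_mul, abs_mul, abs_mul, abs_mul, abs_of_pos (pow_pos hr i),
                abs_of_pos (pow_pos ha l), abs_of_pos (Real.rpow_pos_of_pos hs _),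
                abs_of_nonneg (by positivity : (0:ℝ) ≤ ((l+1:ℕ):ℝ))]
              push_cast; ring
            rw [e1]
            have : r^i * a^l * (r^2+a) ^ (-(β+(m:ℝ))) ≤ (r^2+a) ^ (((m:ℝ)-1)/2 - (β+m)) := by
              calc r^i * a^l * (r^2+a) ^ (-(β+(m:ℝ)))
                  ≤ (r^2+a) ^ (((m:ℝ)-1)/2) * (r^2+a) ^ (-(β+(m:ℝ))) := by
                    refine mul_le_mul_of_nonneg_right ?_ (Real.rpow_nonneg hs.le _)
                    rw [← hdeg]; exact key
                _ = (r^2+a) ^ (((m:ℝ)-1)/2 - (β+m)) := by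
                    rw [← Real.rpow_add hs, ← sub_eq_add_neg]
            calc |c| * ((l:ℝ)+1) * (r^i * a^l * (r^2+a) ^ (-(β+(m:ℝ))))
                ≤ |c| * ((l:ℝ)+1) * ((r^2+a) ^ (((m:ℝ)-1)/2 - (β+m))) :=
                  mul_le_mul_of_nonneg_left this (by positivity)
              _ = |c| * ((l+1:ℕ):ℝ) * (r^2+a) ^ (((m:ℝ)-1)/2 - (β+m)) := by push_cast; ring
        have hb2 : |c * r^i * a^j * ((-(β+(m:ℝ))) * (r^2+a) ^ (-(β+(m:ℝ)) - 1))|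
            ≤ |c| * |β+(m:ℝ)| * (r^2+a) ^ (((m:ℝ)-1)/2 - (β+m)) := by
          have key := mono_prod_le hr ha i j
          have hdeg : ((i:ℝ) + 2*j)/2 = ((m:ℝ)+1)/2 := by
            have := congrArg (fun k : ℕ => (k:ℝ)) h; push_cast at this; linarith
          have e1 : |c * r^i * a^j * ((-(β+(m:ℝ))) * (r^2+a) ^ (-(β+(m:ℝ)) - 1))|
              = |c| * |β+(m:ℝ)| * (r^i * a^j * (r^2+a) ^ (-(β+(m:ℝ)) - 1)) := by
            rw [abs_mul, abs_mul, abs_mul, abs_mul, abs_neg, abs_of_pos (pow_pos hr i),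
              abs_of_pos (pow_pos ha j), abs_of_pos (Real.rpow_pos_of_pos hs _)]
            ring
          rw [e1]
          refine mul_le_mul_of_nonneg_left ?_ (by positivity)
          calc r^i * a^j * (r^2+a) ^ (-(β+(m:ℝ)) - 1)
              ≤ (r^2+a) ^ (((m:ℝ)+1)/2) * (r^2+a) ^ (-(β+(m:ℝ)) - 1) := by
                refine mul_le_mul_of_nonneg_right ?_ (Real.rpow_nonneg hs.le _)
                rw [← hdeg]; exact key
            _ = (r^2+a) ^ (((m:ℝ)-1)/2 - (β+m)) := by
                rw [← Real.rpow_add hs]; congr 1; ring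
        calc |_ + _| ≤ _ := abs_add_le _ _
          _ ≤ |c| * j * (r^2+a) ^ (((m:ℝ)-1)/2 - (β+m)) +
              |c| * |β+(m:ℝ)| * (r^2+a) ^ (((m:ℝ)-1)/2 - (β+m)) := add_le_add hb1 hb2
          _ = (|c| * j + |c| * |β+(m:ℝ)|) * (r^2+a) ^ (((m:ℝ)-1)/2 - (β+m)) := by ring
  | add hF hG ihF ihG =>
    obtain ⟨C₁, F₁, hC₁, hd₁, h₁⟩ := ihF
    obtain ⟨C₂, F₂, hC₂, hd₂, h₂⟩ := ihG
    refine ⟨C₁ + C₂, fun r a => F₁ r a + F₂ r a, by linarith,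
      fun r hr a ha => (hd₁ r hr a ha).add (hd₂ r hr a ha), fun r hr a ha => ?_⟩
    calc |_ + _| ≤ |_| + |_| := abs_add_le _ _
      _ ≤ C₁ * (r^2+a) ^ (((m:ℝ)-1)/2 - (β+m)) + C₂ * (r^2+a) ^ (((m:ℝ)-1)/2 - (β+m)) :=
          add_le_add (h₁ r hr a ha) (h₂ r hr a ha)
      _ = (C₁ + C₂) * (r^2+a) ^ (((m:ℝ)-1)/2 - (β+m)) := by ring

lemma rep_exists (β K : ℝ) (m : ℕ) :
    ∃ F, Rep β m F ∧ ∀ a : ℝ, 0 < a → ∀ r : ℝ, 0 < r →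
      iteratedDeriv m (fun r => K * (r * (r^2+a) ^ (-β))) r = F r a := by
  induction m with
  | zero =>
    refine ⟨fun r a => K * r^1 * a^0 * (r^2+a) ^ (-(β+((0:ℕ):ℝ))), Rep.mono 0 1 0 K (Or.inr rfl), ?_⟩
    intro a ha r hr
    simp only [iteratedDeriv_zero, Nat.cast_zero, add_zero, pow_one, pow_zero, mul_one]
    ring
  | succ m ih =>
    obtain ⟨F, hF, heq⟩ := ih
    obtain ⟨F', hF', hd⟩ := rep_deriv hF
    refine ⟨F', hF', fun a ha r hr => ?_⟩
    rw [iteratedDeriv_succ]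
    have hev : (iteratedDeriv m fun r => K * (r * (r^2+a) ^ (-β))) =ᶠ[nhds r] (fun r => F r a) := by
      filter_upwards [Ioi_mem_nhds hr] with x hx using heq a ha x hx
    rw [hev.deriv_eq]
    exact (hd a ha r hr).deriv

lemma continuousOn_shape (u c : ℝ) (hu : 0 < u) :
    ContinuousOn (fun s : ℝ => (u + s) ^ (-c) * s ^ (c - c - 1)) (Ioi (0:ℝ)) := by
  exact ((continuous_const.add continuous_id).continuousOn.rpow_const
      (fun s hs => Or.inl (by simp only [mem_Ioi] at hs; show u + s ≠ 0; positivity))).mul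
    (continuousOn_id.rpow_const (fun s hs => Or.inl (ne_of_gt hs)))

lemma integrableOn_shape {u δ g' : ℝ} (hu : 0 < u) (hδ : 0 < δ) (hg : δ < g') :
    IntegrableOn (fun s : ℝ => (u + s) ^ (-g') * s ^ (δ - 1)) (Ioi (0:ℝ)) := by
  have hcont : ContinuousOn (fun s : ℝ => (u + s) ^ (-g') * s ^ (δ - 1)) (Ioi (0:ℝ)) :=
    ((continuous_const.add continuous_id).continuousOn.rpow_const
        (fun s hs => Or.inl (by simp only [mem_Ioi] at hs; show u + s ≠ 0; positivity))).mul
      (continuousOn_id.rpow_const (fun s hs => Or.inl (ne_of_gt hs)))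
  have h1 : IntegrableOn (fun s : ℝ => (u + s) ^ (-g') * s ^ (δ - 1)) (Ioc 0 u) := by
    have hbase : IntegrableOn (fun s : ℝ => s ^ (δ - 1)) (Ioc 0 u) :=
      (intervalIntegral.intervalIntegrable_rpow' (by linarith)).1
    refine Integrable.mono' (hbase.const_mul (u ^ (-g'))) ?_ ?_
    · exact (hcont.mono (Ioc_subset_Ioi_self)).aestronglyMeasurable measurableSet_Ioc
    · refine (ae_restrict_iff' measurableSet_Ioc).2 (ae_of_all _ fun s hs => ?_)
      obtain ⟨hs0, hsu⟩ := hs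
      have h1 : (u + s) ^ (-g') ≤ u ^ (-g') :=
        Real.rpow_le_rpow_of_nonpos hu (by linarith) (by linarith)
      have h2 : (0:ℝ) ≤ s ^ (δ - 1) := Real.rpow_nonneg hs0.le _
      rw [Real.norm_eq_abs, abs_of_nonneg (by positivity)]
      exact mul_le_mul_of_nonneg_right h1 h2
  have h2 : IntegrableOn (fun s : ℝ => (u + s) ^ (-g') * s ^ (δ - 1)) (Ioi u) := by
    refine Integrable.mono' (integrableOn_Ioi_rpow_of_lt (show δ - 1 - g' < -1 by linarith) hu) ?_ ?_
    · exact (hcont.mono (Ioi_subset_Ioi hu.le)).aestronglyMeasurable measurableSet_Ioi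
    · refine (ae_restrict_iff' measurableSet_Ioi).2 (ae_of_all _ fun s hs => ?_)
      have hs0 : (0:ℝ) < s := hu.trans hs
      have h1 : (u + s) ^ (-g') ≤ s ^ (-g') :=
        Real.rpow_le_rpow_of_nonpos hs0 (by linarith) (by linarith)
      have h2 : (0:ℝ) ≤ s ^ (δ - 1) := Real.rpow_nonneg hs0.le _
      rw [Real.norm_eq_abs, abs_of_nonneg (by positivity)]
      calc (u + s) ^ (-g') * s ^ (δ - 1) ≤ s ^ (-g') * s ^ (δ - 1) :=
            mul_le_mul_of_nonneg_right h1 h2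
        _ = s ^ (δ - 1 - g') := by rw [← Real.rpow_add hs0]; congr 1; ring
  have := h1.union h2
  rwa [Ioc_union_Ioi_eq_Ioi hu.le] at this

lemma integral_shape_le {u δ g' : ℝ} (hu : 0 < u) (hδ : 0 < δ) (hg : δ < g') :
    ∫ s in Ioi (0:ℝ), (u + s) ^ (-g') * s ^ (δ - 1) ≤ (1/δ + 1/(g'-δ)) * u ^ (δ - g') := by
  have hint := integrableOn_shape hu hδ hg
  have h1 : IntegrableOn (fun s : ℝ => (u + s) ^ (-g') * s ^ (δ - 1)) (Ioc 0 u) :=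
    hint.mono_set (Ioc_subset_Ioi_self)
  have h2 : IntegrableOn (fun s : ℝ => (u + s) ^ (-g') * s ^ (δ - 1)) (Ioi u) :=
    hint.mono_set (Ioi_subset_Ioi hu.le)
  rw [← Ioc_union_Ioi_eq_Ioi hu.le,
    setIntegral_union (Ioc_disjoint_Ioi le_rfl) measurableSet_Ioi h1 h2]
  have hbase : IntegrableOn (fun s : ℝ => s ^ (δ - 1)) (Ioc 0 u) :=
    (intervalIntegral.intervalIntegrable_rpow' (by linarith)).1
  have e1 : ∫ s in Ioc (0:ℝ) u, (u + s) ^ (-g') * s ^ (δ - 1)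
      ≤ u ^ (-g') * (u ^ δ / δ) := by
    calc ∫ s in Ioc (0:ℝ) u, (u + s) ^ (-g') * s ^ (δ - 1)
        ≤ ∫ s in Ioc (0:ℝ) u, u ^ (-g') * s ^ (δ - 1) := by
          refine setIntegral_mono_on h1 (hbase.const_mul _) measurableSet_Ioc fun s hs => ?_
          exact mul_le_mul_of_nonneg_right
            (Real.rpow_le_rpow_of_nonpos hu (by linarith [hs.1]) (by linarith))
            (Real.rpow_nonneg hs.1.le _)
      _ = u ^ (-g') * ∫ s in Ioc (0:ℝ) u, s ^ (δ - 1) := by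
          rw [integral_const_mul]
      _ = u ^ (-g') * (u ^ δ / δ) := by
          rw [← intervalIntegral.integral_of_le hu.le,
            integral_rpow (Or.inl (by linarith : (-1:ℝ) < δ - 1))]
          rw [show δ - 1 + 1 = δ by ring, Real.zero_rpow hδ.ne', sub_zero]
  have e2 : ∫ s in Ioi u, (u + s) ^ (-g') * s ^ (δ - 1) ≤ u ^ (δ - g') / (g' - δ) := by
    calc ∫ s in Ioi u, (u + s) ^ (-g') * s ^ (δ - 1)
        ≤ ∫ s in Ioi u, s ^ (δ - 1 - g') := by
          refine setIntegral_mono_on h2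
            (integrableOn_Ioi_rpow_of_lt (by linarith) hu) measurableSet_Ioi fun s hs => ?_
          have hs0 : (0:ℝ) < s := hu.trans hs
          calc (u + s) ^ (-g') * s ^ (δ - 1)
              ≤ s ^ (-g') * s ^ (δ - 1) := mul_le_mul_of_nonneg_right
                (Real.rpow_le_rpow_of_nonpos hs0 (by linarith) (by linarith))
                (Real.rpow_nonneg hs0.le _)
            _ = s ^ (δ - 1 - g') := by rw [← Real.rpow_add hs0]; congr 1; ring
      _ = -u ^ (δ - 1 - g' + 1) / (δ - 1 - g' + 1) := integral_Ioi_rpow_of_lt (by linarith) hu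
      _ = u ^ (δ - g') / (g' - δ) := by
          rw [show δ - 1 - g' + 1 = δ - g' by ring]
          have hne1 : δ - g' ≠ 0 := by linarith
          have hne2 : g' - δ ≠ 0 := by linarith
          field_simp
          ring
  calc _ ≤ u ^ (-g') * (u ^ δ / δ) + u ^ (δ - g') / (g' - δ) := add_le_add e1 e2
    _ = (1/δ + 1/(g'-δ)) * u ^ (δ - g') := by
        rw [show u ^ (-g') * (u ^ δ / δ) = (u ^ (-g') * u ^ δ) / δ by ring,
          ← Real.rpow_add hu, show -g' + δ = δ - g' by ring]
        ring

lemma key_bound (n : ℕ) (hn : 1 ≤ n) (α : ℝ) (hα : 0 < α) :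
    ∃ CK : ℝ, 0 < CK ∧ ∀ z : EuclideanSpace ℝ (Fin n), z ≠ 0 → ∀ t : ℝ, 0 < t →
      ‖fderiv ℝ (fracKernel n α t) z‖ ≤
        CK * (t + ‖z‖/2) ^ (-((n:ℝ) + 2 + α)) * ‖z‖ := by
  set β : ℝ := ((n:ℝ)+1)/2 with hβdef
  set K : ℝ := Real.Gamma (((n:ℝ)+1)/2) / Real.pi ^ (((n:ℝ)+1)/2) with hKdef
  set m : ℕ := mOf α with hmdef
  set δ : ℝ := (m:ℝ) - α with hδdef
  have hm1 : 1 ≤ m := by rw [hmdef]; exact Nat.succ_le_succ (Nat.zero_le _)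
  have hmcast : (m:ℝ) = (⌊α⌋₊:ℝ) + 1 := by rw [hmdef]; simp [mOf]
  have hδ0 : 0 < δ := by
    have h1 : α < (⌊α⌋₊ : ℝ) + 1 := Nat.lt_floor_add_one α
    rw [hδdef, hmcast]; linarith
  have hδ1 : δ ≤ 1 := by
    have h1 : (⌊α⌋₊ : ℝ) ≤ α := Nat.floor_le hα.le
    rw [hδdef, hmcast]; linarith
  have hβ1 : 1 ≤ β := by
    have : (1:ℝ) ≤ n := by exact_mod_cast hn
    rw [hβdef]; linarith
  obtain ⟨F, hF, hFeq⟩ := rep_exists β K m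
  obtain ⟨C0, hC0, hFbd⟩ := rep_bound hF
  obtain ⟨C1, F', hC1, hFd, hF'bd⟩ := rep_deriv_a hF
  obtain ⟨Fr, hFrRep, hFrd⟩ := rep_deriv hF
  set γ' : ℝ := β + ((m:ℝ)+1)/2 with hγ'def
  have hγ'pos : 0 < γ' := by
    have : (0:ℝ) ≤ m := Nat.cast_nonneg m
    rw [hγ'def]; linarith
  have hexp : ((m:ℝ)-1)/2 - (β + m) = -γ' := by rw [hγ'def]; ring
  have hδγ : δ < 2*γ' := by
    have : (0:ℝ) ≤ m := Nat.cast_nonneg m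
    rw [hγ'def]; linarith
  set γ₀ : ℝ := β + ((m:ℝ)-1)/2 with hγ₀def
  have hexp0 : ((m:ℝ)+1)/2 - (β + (m:ℝ)) = -γ₀ := by rw [hγ₀def]; ring
  have hγ₀pos : 0 < γ₀ := by
    have : (1:ℝ) ≤ m := by exact_mod_cast hm1
    rw [hγ₀def]; linarith
  have hδγ₀ : δ < 2*γ₀ := by
    have : (1:ℝ) ≤ m := by exact_mod_cast hm1
    rw [hγ₀def]; linarith
  have hΓpos : 0 < Real.Gamma δ := Real.Gamma_pos_of_pos hδ0
  set CE : ℝ := 1 / Real.Gamma δ with hCEdef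
  have hCE : 0 < CE := by rw [hCEdef]; positivity
  set C₂ : ℝ := 1/δ + 1/(2*γ' - δ) with hC₂def
  have hC₂ : 0 < C₂ := by
    rw [hC₂def]
    have h1 : (0:ℝ) < 1/δ := by positivity
    have h2 : (0:ℝ) < 1/(2*γ' - δ) := by
      apply one_div_pos.2; linarith
    linarith
  set D1 : ℝ := C1 + 1 with hD1def
  have hD1 : 0 < D1 := by rw [hD1def]; linarith
  have hF'bd2 : ∀ r : ℝ, 0 < r → ∀ a : ℝ, 0 < a →
      |F' r a| ≤ D1 * (r^2+a) ^ (-γ') := by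
    intro r hr a ha
    calc |F' r a| ≤ C1 * (r^2+a) ^ (((m:ℝ)-1)/2 - (β+m)) := hF'bd r hr a ha
      _ = C1 * (r^2+a) ^ (-γ') := by rw [hexp]
      _ ≤ D1 * (r^2+a) ^ (-γ') := by
          refine mul_le_mul_of_nonneg_right (by rw [hD1def]; linarith) ?_
          positivity
  refine ⟨3 * CE * D1 * (2:ℝ)^γ' * C₂, by positivity, ?_⟩
  intro z hz t ht
  have hR0 : (0:ℝ) < ‖z‖ := norm_pos_iff.2 hz
  set w : ℝ := ‖z‖/2 with hwdef
  have hw0 : 0 < w := by rw [hwdef]; positivity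
  have htw : 0 < t + w := by linarith
  -- the kernel as a function of the parameter a is our representation
  have hfrac : ∀ y : EuclideanSpace ℝ (Fin n), 0 < ‖y‖ → fracKernel n α t y =
      (Complex.exp ((↑(-(Real.pi * δ)) : ℂ) * Complex.I) / ((Real.Gamma δ : ℝ) : ℂ)) *
        ((∫ s in Ioi (0:ℝ), F (t+s) (‖y‖^2) * s ^ (δ - 1) : ℝ) : ℂ) := by
    intro y hy
    rw [fracKernel, ← hmdef, ← hδdef]
    congr 2
    refine setIntegral_congr_fun measurableSet_Ioi fun s hs => ?_
    have hs0 : (0:ℝ) < s := hs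
    congr 1
    have hpk : (fun r => halfSpacePoissonKernel n r y) = fun r => K * (r * (r^2 + ‖y‖^2) ^ (-β)) := by
      funext r; rw [hKdef, hβdef]; rfl
    rw [hpk]
    exact hFeq (‖y‖^2) (by positivity) (t+s) (by linarith)
  have hEnorm : ‖Complex.exp ((↑(-(Real.pi * δ)) : ℂ) * Complex.I) /
      ((Real.Gamma δ : ℝ) : ℂ)‖ = CE := by
    rw [norm_div, Complex.norm_exp_ofReal_mul_I, Complex.norm_real, Real.norm_eq_abs,
      abs_of_pos hΓpos, hCEdef]
  -- integrability of the integrand for each parameter value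
  have hint : ∀ a : ℝ, 0 < a →
      IntegrableOn (fun s => F (t+s) a * s ^ (δ-1)) (Ioi (0:ℝ)) := by
    intro a ha
    refine Integrable.mono' ((integrableOn_shape ht hδ0 hδγ₀).const_mul C0) ?_ ?_
    · refine ContinuousOn.aestronglyMeasurable (fun s hs => ?_) measurableSet_Ioi
      have hs0 : (0:ℝ) < s := hs
      have h1 : ContinuousWithinAt (fun s : ℝ => F (t+s) a) (Ioi 0) s := by
        have hc : ContinuousAt (fun r => F r a) (t+s) :=
          (hFrd a ha (t+s) (by linarith)).continuousAt
        exact (hc.comp ((continuous_const.add continuous_id).continuousAt)).continuousWithinAt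
      have h2 : ContinuousWithinAt (fun s : ℝ => s ^ (δ-1)) (Ioi 0) s :=
        (continuousOn_id.rpow_const (fun x hx => Or.inl (ne_of_gt hx))) s hs
      exact h1.mul h2
    · refine (ae_restrict_iff' measurableSet_Ioi).2 (ae_of_all _ fun s hs => ?_)
      have hs0 : (0:ℝ) < s := hs
      have hts : (0:ℝ) < t + s := by linarith
      have hb1 : |F (t+s) a| ≤ C0 * ((t+s)^2 + a) ^ (-γ₀) := by
        rw [← hexp0]; exact hFbd (t+s) hts a ha
      have hb2 : ((t+s)^2 + a) ^ (-γ₀) ≤ (t+s) ^ (-(2*γ₀)) := by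
        calc ((t+s)^2 + a) ^ (-γ₀) ≤ ((t+s)^2) ^ (-γ₀) :=
              Real.rpow_le_rpow_of_nonpos (by positivity) (by linarith) (by linarith)
          _ = (t+s) ^ (-(2*γ₀)) := by
              rw [show (t+s)^2 = (t+s) ^ ((2:ℕ):ℝ) by rw [Real.rpow_natCast],
                ← Real.rpow_mul hts.le]
              congr 1; push_cast; ring
      rw [Real.norm_eq_abs, abs_mul, abs_of_nonneg (Real.rpow_nonneg hs0.le _)]
      calc |F (t+s) a| * s ^ (δ-1) ≤ (C0 * ((t+s)^2 + a) ^ (-γ₀)) * s ^ (δ-1) :=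
            mul_le_mul_of_nonneg_right hb1 (Real.rpow_nonneg hs0.le _)
        _ ≤ (C0 * (t+s) ^ (-(2*γ₀))) * s ^ (δ-1) := by
            refine mul_le_mul_of_nonneg_right ?_ (Real.rpow_nonneg hs0.le _)
            exact mul_le_mul_of_nonneg_left hb2 hC0
        _ = C0 * ((t+s) ^ (-(2*γ₀)) * s ^ (δ-1)) := by ring
  -- Lipschitz estimate on the ball of radius w around z
  have hLip : ∀ x ∈ Metric.ball z w, ‖fracKernel n α t x - fracKernel n α t z‖ ≤
      (CE * D1 * (2:ℝ)^γ' * C₂ * (t+w) ^ (δ - 2*γ') * (3*‖z‖)) * ‖x - z‖ := by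
    intro x hx
    have hxz : ‖x - z‖ < w := by rwa [Metric.mem_ball, dist_eq_norm] at hx
    have hxlb : w < ‖x‖ := by
      have h1 : ‖z‖ - ‖x‖ ≤ ‖z - x‖ := norm_sub_norm_le z x
      rw [norm_sub_rev] at h1
      rw [hwdef] at hxz ⊢; linarith
    have hxub : ‖x‖ ≤ ‖z‖ + w := by
      have h1 : ‖x‖ - ‖z‖ ≤ ‖x - z‖ := norm_sub_norm_le x z
      linarith
    have hx0 : (0:ℝ) < ‖x‖ := hw0.trans hxlb
    have hax : (0:ℝ) < ‖x‖^2 := by positivity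
    have haz : (0:ℝ) < ‖z‖^2 := by positivity
    have haxw : w^2 ≤ ‖x‖^2 := by
      have := pow_le_pow_left₀ hw0.le hxlb.le 2; exact this
    have hazw : w^2 ≤ ‖z‖^2 := by
      refine pow_le_pow_left₀ hw0.le ?_ 2; rw [hwdef]; linarith
    rw [hfrac x hx0, hfrac z hR0, ← mul_sub, norm_mul, hEnorm, ← Complex.ofReal_sub,
      Complex.norm_real, Real.norm_eq_abs]
    -- difference of the two parameter integrals
    have hw2 : (0:ℝ) < w^2 := by positivity
    have hmean : ∀ s : ℝ, s ∈ Ioi (0:ℝ) → |F (t+s) (‖x‖^2) - F (t+s) (‖z‖^2)| ≤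
        (D1 * ((t+s)^2 + w^2) ^ (-γ')) * |‖x‖^2 - ‖z‖^2| := by
      intro s hs
      have hs0 : (0:ℝ) < s := hs
      have hts : (0:ℝ) < t + s := by linarith
      have := Convex.norm_image_sub_le_of_norm_hasDerivWithin_le
        (f := fun a => F (t+s) a) (f' := fun a => F' (t+s) a) (s := Ici (w^2))
        (C := D1 * ((t+s)^2 + w^2) ^ (-γ'))
        (fun b hb => (hFd (t+s) hts b (lt_of_lt_of_le hw2 hb)).hasDerivWithinAt)
        (fun b hb => ?_) (convex_Ici _) hazw haxw
      · simpa [Real.norm_eq_abs] using this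
      · have hb0 : (0:ℝ) < b := lt_of_lt_of_le hw2 hb
        calc ‖F' (t+s) b‖ = |F' (t+s) b| := by rw [Real.norm_eq_abs]
          _ ≤ D1 * ((t+s)^2 + b) ^ (-γ') := hF'bd2 (t+s) hts b hb0
          _ ≤ D1 * ((t+s)^2 + w^2) ^ (-γ') := by
              refine mul_le_mul_of_nonneg_left ?_ hD1.le
              refine Real.rpow_le_rpow_of_nonpos (by positivity)
                (by linarith [mem_Ici.1 hb]) (by linarith)
    have hintx := hint (‖x‖^2) hax
    have hintz := hint (‖z‖^2) haz
    have hshape : IntegrableOn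
        (fun s : ℝ => ((t+w) + s) ^ (-(2*γ')) * s ^ (δ-1)) (Ioi (0:ℝ)) :=
      integrableOn_shape htw hδ0 hδγ
    have hstep : |(∫ s in Ioi (0:ℝ), F (t+s) (‖x‖^2) * s ^ (δ - 1)) -
        ∫ s in Ioi (0:ℝ), F (t+s) (‖z‖^2) * s ^ (δ - 1)| ≤
        (D1 * |‖x‖^2 - ‖z‖^2| * (2:ℝ)^γ') * (C₂ * (t+w) ^ (δ - 2*γ')) := by
      rw [← integral_sub hintx hintz]
      have hmono : |∫ s in Ioi (0:ℝ),
            (F (t+s) (‖x‖^2) * s ^ (δ - 1) - F (t+s) (‖z‖^2) * s ^ (δ - 1))| ≤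
          ∫ s in Ioi (0:ℝ), (D1 * |‖x‖^2 - ‖z‖^2| * (2:ℝ)^γ') *
            (((t+w) + s) ^ (-(2*γ')) * s ^ (δ-1)) := by
        rw [← Real.norm_eq_abs]
        refine (norm_integral_le_integral_norm _).trans ?_
        refine setIntegral_mono_on ((hintx.sub hintz).norm)
          ((hshape.const_mul _)) measurableSet_Ioi fun s hs => ?_
        have hs0 : (0:ℝ) < s := hs
        have hts : (0:ℝ) < t + s := by linarith
        have h2γ : ((t+s)^2 + w^2) ^ (-γ') ≤ (2:ℝ)^γ' * ((t+w) + s) ^ (-(2*γ')) := by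
          have hsq : ((t+w)+s)^2 ≤ 2*((t+s)^2 + w^2) := by nlinarith [sq_nonneg (t+s-w)]
          have hpos2 : (0:ℝ) < ((t+w)+s)^2/2 := by positivity
          calc ((t+s)^2 + w^2) ^ (-γ') ≤ (((t+w)+s)^2/2) ^ (-γ') :=
                Real.rpow_le_rpow_of_nonpos hpos2 (by linarith) (by linarith)
            _ = (2:ℝ)^γ' * ((t+w) + s) ^ (-(2*γ')) := by
                rw [Real.div_rpow (sq_nonneg _) (by norm_num : (0:ℝ) ≤ 2),
                  Real.rpow_neg (by norm_num : (0:ℝ) ≤ 2),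
                  show ((t+w)+s)^2 = ((t+w)+s) ^ ((2:ℕ):ℝ) by rw [Real.rpow_natCast],
                  ← Real.rpow_mul (by positivity)]
                rw [show ((2:ℕ):ℝ) * (-γ') = -(2*γ') by push_cast; ring,
                  div_eq_mul_inv, inv_inv]
                ring
        rw [Real.norm_eq_abs, ← sub_mul, abs_mul, abs_of_nonneg (Real.rpow_nonneg hs0.le _)]
        calc |F (t+s) (‖x‖^2) - F (t+s) (‖z‖^2)| * s ^ (δ-1)
            ≤ ((D1 * ((t+s)^2 + w^2) ^ (-γ')) * |‖x‖^2 - ‖z‖^2|) * s ^ (δ-1) :=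
              mul_le_mul_of_nonneg_right (hmean s hs) (Real.rpow_nonneg hs0.le _)
          _ ≤ ((D1 * ((2:ℝ)^γ' * ((t+w) + s) ^ (-(2*γ')))) * |‖x‖^2 - ‖z‖^2|) * s ^ (δ-1) := by
              refine mul_le_mul_of_nonneg_right ?_ (Real.rpow_nonneg hs0.le _)
              refine mul_le_mul_of_nonneg_right ?_ (abs_nonneg _)
              exact mul_le_mul_of_nonneg_left h2γ hD1.le
          _ = (D1 * |‖x‖^2 - ‖z‖^2| * (2:ℝ)^γ') *
              (((t+w) + s) ^ (-(2*γ')) * s ^ (δ-1)) := by ring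
      refine hmono.trans ?_
      rw [integral_const_mul]
      refine mul_le_mul_of_nonneg_left ?_ (by positivity)
      have := integral_shape_le htw hδ0 hδγ
      calc ∫ s in Ioi (0:ℝ), ((t+w) + s) ^ (-(2*γ')) * s ^ (δ-1)
          ≤ (1/δ + 1/(2*γ' - δ)) * (t+w) ^ (δ - 2*γ') := this
        _ = C₂ * (t+w) ^ (δ - 2*γ') := by rw [hC₂def]
    -- |a_x - a_z| ≤ 3‖z‖ ‖x - z‖
    have habs : |‖x‖^2 - ‖z‖^2| ≤ 3*‖z‖*‖x - z‖ := by
      have h1 : |‖x‖ - ‖z‖| ≤ ‖x - z‖ := abs_norm_sub_norm_le x z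
      have h2 : ‖x‖ + ‖z‖ ≤ 3*‖z‖ := by rw [hwdef] at hxub; linarith
      calc |‖x‖^2 - ‖z‖^2| = |‖x‖ - ‖z‖| * |‖x‖ + ‖z‖| := by
            rw [← abs_mul]; congr 1; ring
        _ ≤ ‖x - z‖ * (3*‖z‖) := by
            refine mul_le_mul h1 ?_ (abs_nonneg _) (norm_nonneg _)
            rw [abs_of_nonneg (by positivity)]; exact h2
        _ = 3*‖z‖*‖x - z‖ := by ring
    calc CE * |(∫ s in Ioi (0:ℝ), F (t+s) (‖x‖^2) * s ^ (δ - 1)) -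
          ∫ s in Ioi (0:ℝ), F (t+s) (‖z‖^2) * s ^ (δ - 1)|
        ≤ CE * ((D1 * |‖x‖^2 - ‖z‖^2| * (2:ℝ)^γ') * (C₂ * (t+w) ^ (δ - 2*γ'))) :=
          mul_le_mul_of_nonneg_left hstep hCE.le
      _ ≤ CE * ((D1 * (3*‖z‖*‖x - z‖) * (2:ℝ)^γ') * (C₂ * (t+w) ^ (δ - 2*γ'))) := by
          refine mul_le_mul_of_nonneg_left ?_ hCE.le
          refine mul_le_mul_of_nonneg_right ?_ (by positivity)
          refine mul_le_mul_of_nonneg_right ?_ (by positivity)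
          exact mul_le_mul_of_nonneg_left habs hD1.le
      _ = (CE * D1 * (2:ℝ)^γ' * C₂ * (t+w) ^ (δ - 2*γ') * (3*‖z‖)) * ‖x - z‖ := by ring
  -- conclude via the converse mean value inequality
  have hfdbd : ‖fderiv ℝ (fracKernel n α t) z‖ ≤
      CE * D1 * (2:ℝ)^γ' * C₂ * (t+w) ^ (δ - 2*γ') * (3*‖z‖) := by
    refine norm_fderiv_le_of_lip' ℝ (by positivity) ?_
    filter_upwards [Metric.ball_mem_nhds z hw0] with x hx using hLip x hx
  have hexp2 : δ - 2*γ' = -((n:ℝ) + 2 + α) := by rw [hδdef, hγ'def, hβdef]; ring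
  calc ‖fderiv ℝ (fracKernel n α t) z‖
      ≤ CE * D1 * (2:ℝ)^γ' * C₂ * (t+w) ^ (δ - 2*γ') * (3*‖z‖) := hfdbd
    _ = 3 * CE * D1 * (2:ℝ)^γ' * C₂ * (t + ‖z‖/2) ^ (-((n:ℝ) + 2 + α)) * ‖z‖ := by
        rw [hexp2, hwdef]; ring

end Stmt7

/-- For `1 < q < ∞` and `α > 0` there is `C = C(n,q,α) > 0` such that for
every `z ≠ 0`, `(∫₀^∞ |t^α ∇_z ∂_t^α p_t(z)|^q dt/t)^{1/q} ≤ C |z|^{−(n+1)}`, where `∇_z` is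
the (Fréchet) gradient in `z` and `|·|` its norm. -/
theorem stmt_7 (n : ℕ) (hn : 1 ≤ n) (q : ℝ) (hq : 1 < q) (α : ℝ) (hα : 0 < α) :
    ∃ C : ℝ, 0 < C ∧ ∀ z : EuclideanSpace ℝ (Fin n), z ≠ 0 →
      (∫⁻ t in Ioi (0 : ℝ),
          ENNReal.ofReal ((t ^ α * ‖fderiv ℝ (fracKernel n α t) z‖) ^ q / t)) ^ (1 / q) ≤
        ENNReal.ofReal (C / ‖z‖ ^ (n + 1)) := by
  obtain ⟨CK, hCK, hbd⟩ := Stmt7.key_bound n hn α hα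
  have hq0 : (0:ℝ) < q := by linarith
  set E1 : ℝ := (n:ℝ) + 1 + α with hE1def
  have hE1 : 0 < E1 := by rw [hE1def]; positivity
  have hαq : (0:ℝ) < α * q := by positivity
  have hlt : α * q < E1 * q := by
    have : α < E1 := by rw [hE1def]; have : (0:ℝ) ≤ n := Nat.cast_nonneg n; linarith
    exact mul_lt_mul_of_pos_right this hq0
  set C₂' : ℝ := 1/(α*q) + 1/(E1*q - α*q) with hC₂'def
  have hC₂' : 0 < C₂' := by
    rw [hC₂'def]
    have h1 : (0:ℝ) < 1/(α*q) := by positivity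
    have h2 : (0:ℝ) < 1/(E1*q - α*q) := one_div_pos.2 (by linarith)
    linarith
  refine ⟨((2*CK) ^ q * C₂') ^ (1/q) * 2 ^ (n+1), by positivity, ?_⟩
  intro z hz
  have hR0 : (0:ℝ) < ‖z‖ := norm_pos_iff.2 hz
  set w : ℝ := ‖z‖/2 with hwdef
  have hw0 : 0 < w := by rw [hwdef]; positivity
  -- pointwise bound on the integrand
  have hpt : ∀ t : ℝ, t ∈ Ioi (0:ℝ) →
      ENNReal.ofReal ((t ^ α * ‖fderiv ℝ (fracKernel n α t) z‖) ^ q / t) ≤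
      ENNReal.ofReal ((2*CK) ^ q * ((w + t) ^ (-(E1*q)) * t ^ (α*q - 1))) := by
    intro t htmem
    have ht : (0:ℝ) < t := htmem
    have htw : (0:ℝ) < t + w := by linarith
    refine ENNReal.ofReal_le_ofReal ?_
    have h1 : ‖fderiv ℝ (fracKernel n α t) z‖ ≤ 2*CK * (t+w) ^ (-E1) := by
      have hb := hbd z hz t ht
      have he : -((n:ℝ) + 2 + α) = -E1 - 1 := by rw [hE1def]; ring
      rw [he, ← hwdef] at hb
      calc ‖fderiv ℝ (fracKernel n α t) z‖ ≤ CK * (t + w) ^ (-E1 - 1) * ‖z‖ := hb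
        _ = 2*CK * ((t+w) ^ (-E1 - 1) * w) := by rw [hwdef]; ring
        _ ≤ 2*CK * ((t+w) ^ (-E1 - 1) * (t+w)) := by
            refine mul_le_mul_of_nonneg_left ?_ (by positivity)
            exact mul_le_mul_of_nonneg_left (by linarith) (Real.rpow_nonneg htw.le _)
        _ = 2*CK * (t+w) ^ (-E1) := by
            rw [← Real.rpow_add_one htw.ne' (-E1 - 1), show -E1 - 1 + 1 = -E1 by ring]
    have h2 : t ^ α * ‖fderiv ℝ (fracKernel n α t) z‖ ≤
        2*CK * (t ^ α * (t+w) ^ (-E1)) := by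
      calc t ^ α * ‖fderiv ℝ (fracKernel n α t) z‖
          ≤ t ^ α * (2*CK * (t+w) ^ (-E1)) :=
            mul_le_mul_of_nonneg_left h1 (Real.rpow_nonneg ht.le _)
        _ = 2*CK * (t ^ α * (t+w) ^ (-E1)) := by ring
    have h3 : (t ^ α * ‖fderiv ℝ (fracKernel n α t) z‖) ^ q ≤
        (2*CK * (t ^ α * (t+w) ^ (-E1))) ^ q :=
      Real.rpow_le_rpow (by positivity) h2 hq0.le
    have h4 : (2*CK * (t ^ α * (t+w) ^ (-E1))) ^ q =
        (2*CK) ^ q * (t ^ (α*q) * (t+w) ^ (-E1*q)) := by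
      rw [Real.mul_rpow (by positivity) (by positivity),
        Real.mul_rpow (Real.rpow_nonneg ht.le _) (Real.rpow_nonneg htw.le _),
        ← Real.rpow_mul ht.le, ← Real.rpow_mul htw.le]
    calc (t ^ α * ‖fderiv ℝ (fracKernel n α t) z‖) ^ q / t
        ≤ (2*CK) ^ q * (t ^ (α*q) * (t+w) ^ (-E1*q)) / t := by
          rw [← h4]; gcongr
      _ = (2*CK) ^ q * ((w + t) ^ (-(E1*q)) * t ^ (α*q - 1)) := by
          rw [Real.rpow_sub_one ht.ne', show -E1*q = -(E1*q) by ring, add_comm w t]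
          ring
  have hInt : IntegrableOn
      (fun t : ℝ => (2*CK) ^ q * ((w + t) ^ (-(E1*q)) * t ^ (α*q - 1))) (Ioi (0:ℝ)) :=
    (Stmt7.integrableOn_shape hw0 hαq hlt).const_mul _
  have hmain : (∫⁻ t in Ioi (0 : ℝ),
      ENNReal.ofReal ((t ^ α * ‖fderiv ℝ (fracKernel n α t) z‖) ^ q / t)) ≤
      ENNReal.ofReal ((2*CK) ^ q * (C₂' * w ^ (α*q - E1*q))) := by
    calc (∫⁻ t in Ioi (0 : ℝ),
        ENNReal.ofReal ((t ^ α * ‖fderiv ℝ (fracKernel n α t) z‖) ^ q / t))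
        ≤ ∫⁻ t in Ioi (0:ℝ),
            ENNReal.ofReal ((2*CK) ^ q * ((w + t) ^ (-(E1*q)) * t ^ (α*q - 1))) := by
          refine lintegral_mono_ae ?_
          filter_upwards [ae_restrict_mem measurableSet_Ioi] with t ht using hpt t ht
      _ = ENNReal.ofReal (∫ t in Ioi (0:ℝ),
            (2*CK) ^ q * ((w + t) ^ (-(E1*q)) * t ^ (α*q - 1))) := by
          rw [← ofReal_integral_eq_lintegral_ofReal hInt ?_]
          refine (ae_restrict_iff' measurableSet_Ioi).2 (ae_of_all _ fun t ht => ?_)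
          have ht0 : (0:ℝ) < t := ht
          have : (0:ℝ) < w + t := by linarith
          positivity
      _ ≤ ENNReal.ofReal ((2*CK) ^ q * (C₂' * w ^ (α*q - E1*q))) := by
          refine ENNReal.ofReal_le_ofReal ?_
          rw [integral_const_mul]
          refine mul_le_mul_of_nonneg_left ?_ (by positivity)
          have := Stmt7.integral_shape_le hw0 hαq hlt
          rw [hC₂'def]
          exact this
  calc (∫⁻ t in Ioi (0 : ℝ),
      ENNReal.ofReal ((t ^ α * ‖fderiv ℝ (fracKernel n α t) z‖) ^ q / t)) ^ (1/q)
      ≤ (ENNReal.ofReal ((2*CK) ^ q * (C₂' * w ^ (α*q - E1*q)))) ^ (1/q) :=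
        ENNReal.rpow_le_rpow hmain (by positivity)
    _ = ENNReal.ofReal ((((2*CK) ^ q * (C₂' * w ^ (α*q - E1*q)))) ^ (1/q)) :=
        ENNReal.ofReal_rpow_of_nonneg (by positivity) (by positivity)
    _ = ENNReal.ofReal (((2*CK) ^ q * C₂') ^ (1/q) * 2 ^ (n+1) / ‖z‖ ^ (n+1)) := by
        congr 1
        rw [show (2*CK) ^ q * (C₂' * w ^ (α*q - E1*q)) =
            ((2*CK) ^ q * C₂') * w ^ (α*q - E1*q) by ring]
        rw [Real.mul_rpow (by positivity) (Real.rpow_nonneg hw0.le _),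
          ← Real.rpow_mul hw0.le]
        rw [show (α*q - E1*q) * (1/q) = -((n:ℝ)+1) from by
          rw [show α*q - E1*q = (α - E1)*q by ring, mul_one_div,
            mul_div_cancel_right₀ _ hq0.ne', hE1def]; ring]
        rw [show -((n:ℝ)+1) = -(((n+1:ℕ):ℝ)) by push_cast; ring,
          Real.rpow_neg hw0.le, Real.rpow_natCast]
        rw [hwdef, div_pow, inv_div]
        ring
end

section
/- Let 1 < q < ∞ and α > 0. There exists a constant C = C(n, q, α) > 0 such that for all x, z ∈ ℝⁿ with x ≠ z, ( ∬_{Γ(0)} |t^α ∂_t^α p_t(x + y − z)|^q dy dt / t^{n+1} )^{1/q} ≤ C · |x − z|^{−n}, where Γ(0) = {(y,t) ∈ ℝⁿ × (0,∞) : |y| < t} is the standard cone with vertex 0. -/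
open MeasureTheory Set
open scoped ENNReal

namespace S8

/-- coefficients in the expansion of the m-th derivative of `t ↦ t*(t²+r²)^{-β}` -/
noncomputable def c (n : ℕ) : ℕ → ℕ → ℝ
  | 0, 0 => 1
  | 0, _+1 => 0
  | m+1, 0 => (1 - (m:ℝ)) * c n m 0
  | m+1, k+1 => (2*(k:ℝ)+3-(m:ℝ)) * c n m (k+1) - 2*(((n:ℝ)+1)/2 + (k:ℝ)) * c n m k

lemma c_eq_zero_of_gt (n : ℕ) : ∀ m k, m < k → c n m k = 0 := by
  intro m
  induction m with
  | zero => intro k hk; match k, hk with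
    | k+1, _ => rfl
  | succ m ih =>
    intro k hk
    match k, hk with
    | k+1, hk =>
      have h1 : c n m (k+1) = 0 := ih _ (by omega)
      have h2 : c n m k = 0 := ih _ (by omega)
      simp [c, h1, h2]

lemma c_eq_zero_of_lt (n : ℕ) : ∀ m k, 2*k+1 < m → c n m k = 0 := by
  intro m
  induction m with
  | zero => omega
  | succ m ih =>
    intro k hk
    match k with
    | 0 =>
      rcases Nat.lt_or_ge 1 m with h | h
      · simp [c, ih 0 h]
      · interval_cases m
        · omega
        · norm_num [c]
    | k+1 =>
      have h2 : c n m k = 0 := ih _ (by omega)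
      rcases Nat.lt_or_ge (2*(k+1)+1) m with h | h
      · simp [c, ih (k+1) h, h2]
      · have : m = 2*k+3 := by omega
        subst this
        simp [c, h2]


/-- basic term -/
noncomputable def T (n m k : ℕ) (r t : ℝ) : ℝ :=
  t ^ (2*(k:ℤ)+1-(m:ℤ)) * (t^2 + r^2) ^ (-(((n:ℝ)+1)/2) - (k:ℝ))

lemma hasDerivAt_T (n m k : ℕ) (r : ℝ) {t : ℝ} (ht : 0 < t) :
    HasDerivAt (fun s => T n m k r s)
      ((2*(k:ℝ)+1-(m:ℝ)) * T n (m+1) k r t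
        - 2*(((n:ℝ)+1)/2 + (k:ℝ)) * T n (m+1) (k+1) r t) t := by
  have hu : 0 < t^2 + r^2 := by positivity
  have h1 : HasDerivAt (fun s : ℝ => s ^ (2*(k:ℤ)+1-(m:ℤ)))
      ((2*(k:ℝ)+1-(m:ℝ)) * t ^ (2*(k:ℤ)+1-(m:ℤ)-1)) t := by
    have := hasDerivAt_zpow (2*(k:ℤ)+1-(m:ℤ)) t (Or.inl ht.ne')
    refine this.congr_deriv ?_
    push_cast; ring
  have h2 : HasDerivAt (fun s : ℝ => (s^2 + r^2) ^ (-(((n:ℝ)+1)/2) - (k:ℝ)))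
      ((2*t) * (-(((n:ℝ)+1)/2) - (k:ℝ)) * (t^2+r^2) ^ (-(((n:ℝ)+1)/2) - (k:ℝ) - 1)) t := by
    have hin : HasDerivAt (fun s : ℝ => s^2 + r^2) (2*t) t := by
      simpa using ((hasDerivAt_pow 2 t).add_const (r^2))
    exact hin.rpow_const (Or.inl hu.ne')
  have := h1.mul h2
  refine this.congr_deriv ?_
  unfold T
  have e1 : t ^ (2*(k:ℤ)+1-(m:ℤ)) * t = t ^ (2*((k:ℤ)+1)+1-((m:ℤ)+1)) := by
    rw [← zpow_add_one₀ ht.ne']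
    ring_nf
  have e2 : (2*((k:ℤ)+1)+1-((m:ℤ)+1)) = (2*(k:ℤ)+1-(m:ℤ)+1) := by ring
  push_cast
  rw [show (-(((n:ℝ)+1)/2) - ((k:ℝ)+1)) = (-(((n:ℝ)+1)/2) - (k:ℝ) - 1) by ring,
      show (2*(k:ℤ)+1-((m:ℤ)+1)) = (2*(k:ℤ)+1-(m:ℤ)-1) by ring]
  rw [show (2*((k:ℤ)+1)+1-((m:ℤ)+1)) = 2*(k:ℤ)+1-(m:ℤ)+1 from by ring,
    zpow_add_one₀ ht.ne']
  ring


noncomputable def phi (n : ℕ) (r t : ℝ) : ℝ := t * (t^2 + r^2) ^ (-(((n:ℝ)+1)/2))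

lemma iteratedDeriv_phi (n : ℕ) (r : ℝ) : ∀ (m : ℕ) {t : ℝ}, 0 < t →
    iteratedDeriv m (phi n r) t = ∑ k ∈ Finset.range (m+1), c n m k * T n m k r t := by
  intro m
  induction m with
  | zero =>
    intro t ht
    rw [iteratedDeriv_zero]
    norm_num [Finset.sum_range_succ, Finset.sum_range_zero]
    show phi n r t = c n 0 0 * T n 0 0 r t
    norm_num [phi, c, T]
  | succ m ih =>
    intro t ht
    rw [iteratedDeriv_succ]
    have hev : iteratedDeriv m (phi n r) =ᶠ[nhds t]
        (fun s => ∑ k ∈ Finset.range (m+1), c n m k * T n m k r s) := by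
      filter_upwards [Ioi_mem_nhds ht] with s hs
      exact ih hs
    rw [hev.deriv_eq]
    have hd : HasDerivAt (fun s => ∑ k ∈ Finset.range (m+1), c n m k * T n m k r s)
        (∑ k ∈ Finset.range (m+1), c n m k *
          ((2*(k:ℝ)+1-(m:ℝ)) * T n (m+1) k r t
            - 2*(((n:ℝ)+1)/2 + (k:ℝ)) * T n (m+1) (k+1) r t)) t := by
      apply HasDerivAt.fun_sum
      intro k _
      exact (hasDerivAt_T n m k r ht).const_mul _
    rw [hd.deriv]
    have hz : c n m (m+1) = 0 := c_eq_zero_of_gt n m (m+1) (by omega)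
    have hc0 : c n (m+1) 0 = (1 - (m:ℝ)) * c n m 0 := rfl
    have hcs : ∀ k : ℕ, c n (m+1) (k+1)
        = (2*(k:ℝ)+3-(m:ℝ)) * c n m (k+1) - 2*(((n:ℝ)+1)/2 + (k:ℝ)) * c n m k := fun k => rfl
    have L : ∑ k ∈ Finset.range (m+1),
          c n m k * ((2*(k:ℝ)+1-(m:ℝ)) * T n (m+1) k r t
            - 2*(((n:ℝ)+1)/2 + (k:ℝ)) * T n (m+1) (k+1) r t)
        = (∑ k ∈ Finset.range (m+1), (2*(k:ℝ)+1-(m:ℝ)) * c n m k * T n (m+1) k r t)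
          - ∑ k ∈ Finset.range (m+1),
              2*(((n:ℝ)+1)/2 + (k:ℝ)) * c n m k * T n (m+1) (k+1) r t := by
      rw [← Finset.sum_sub_distrib]
      exact Finset.sum_congr rfl fun k _ => by ring
    have M : ∑ k ∈ Finset.range (m+1), (2*(k:ℝ)+1-(m:ℝ)) * c n m k * T n (m+1) k r t
        = (∑ k ∈ Finset.range (m+1), (2*(k:ℝ)+3-(m:ℝ)) * c n m (k+1) * T n (m+1) (k+1) r t)
          + (1-(m:ℝ)) * c n m 0 * T n (m+1) 0 r t := by
      rw [Finset.sum_range_succ'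
        (fun k => (2*(k:ℝ)+1-(m:ℝ)) * c n m k * T n (m+1) k r t) m]
      rw [Finset.sum_range_succ
        (fun k => (2*(k:ℝ)+3-(m:ℝ)) * c n m (k+1) * T n (m+1) (k+1) r t) m]
      rw [hz]
      have : ∀ k : ℕ, (2*((k:ℕ)+1:ℕ)+1-(m:ℝ)) * c n m (k+1) * T n (m+1) (k+1) r t
          = (2*(k:ℝ)+3-(m:ℝ)) * c n m (k+1) * T n (m+1) (k+1) r t := by
        intro k; push_cast; ring
      rw [Finset.sum_congr rfl (fun k _ => this k)]
      push_cast
      ring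
    have R : ∑ k ∈ Finset.range (m+1+1), c n (m+1) k * T n (m+1) k r t
        = (∑ k ∈ Finset.range (m+1), c n (m+1) (k+1) * T n (m+1) (k+1) r t)
          + c n (m+1) 0 * T n (m+1) 0 r t :=
      Finset.sum_range_succ' _ _
    have hXZ : (∑ k ∈ Finset.range (m+1),
            (2*(k:ℝ)+3-(m:ℝ)) * c n m (k+1) * T n (m+1) (k+1) r t)
          - ∑ k ∈ Finset.range (m+1),
              2*(((n:ℝ)+1)/2 + (k:ℝ)) * c n m k * T n (m+1) (k+1) r t
        = ∑ k ∈ Finset.range (m+1), c n (m+1) (k+1) * T n (m+1) (k+1) r t := by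
      rw [← Finset.sum_sub_distrib]
      exact Finset.sum_congr rfl fun k _ => by rw [hcs k]; ring
    rw [L, M, R, hc0, ← hXZ]
    ring

lemma abs_term_le (n m k : ℕ) {r t : ℝ} (hr : 0 ≤ r) (ht : 0 < t) :
    |c n m k * T n m k r t|
      ≤ |c n m k| * 2 ^ (((n:ℝ)+1)/2 + (k:ℝ)) * (t+r) ^ (-((n:ℝ)+(m:ℝ))) := by
  by_cases hc : c n m k = 0
  · simp only [hc, abs_zero, zero_mul]
    positivity
  · have hm : m ≤ 2*k+1 := by
      by_contra h
      exact hc (c_eq_zero_of_lt n m k (by omega))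
    have htr : 0 < t + r := by linarith
    have hu : 0 < t^2+r^2 := by positivity
    have hTnn : 0 ≤ T n m k r t := by
      unfold T
      have : (0:ℝ) < t ^ (2*(k:ℤ)+1-(m:ℤ)) := zpow_pos ht _
      positivity
    rw [abs_mul, abs_of_nonneg hTnn, mul_assoc]
    apply mul_le_mul_of_nonneg_left _ (abs_nonneg _)
    have hz : (2*(k:ℤ)+1-(m:ℤ)) = ((2*k+1-m : ℕ) : ℤ) := by omega
    have h1 : t ^ (2*(k:ℤ)+1-(m:ℤ)) ≤ (t+r) ^ (2*k+1-m : ℕ) := by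
      rw [hz, zpow_natCast]
      exact pow_le_pow_left₀ ht.le (by linarith) _
    have h2 : (t^2+r^2) ^ (-(((n:ℝ)+1)/2) - (k:ℝ))
        ≤ ((t+r)^2/2) ^ (-(((n:ℝ)+1)/2) - (k:ℝ)) := by
      apply Real.rpow_le_rpow_of_nonpos (by positivity) (by nlinarith [sq_nonneg (t-r)])
      have : (0:ℝ) ≤ ((n:ℝ)+1)/2 + (k:ℝ) := by positivity
      linarith
    have e2 : ((t+r)^2/2 : ℝ) ^ (-(((n:ℝ)+1)/2) - (k:ℝ))
        = 2 ^ (((n:ℝ)+1)/2 + (k:ℝ)) * ((t+r) ^ (2*(-(((n:ℝ)+1)/2) - (k:ℝ)))) := by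
      rw [Real.div_rpow (by positivity) (by norm_num : (0:ℝ) ≤ 2)]
      rw [div_eq_mul_inv, ← Real.rpow_neg (by norm_num : (0:ℝ) ≤ 2)]
      rw [show -(-(((n:ℝ)+1)/2) - (k:ℝ)) = ((n:ℝ)+1)/2 + (k:ℝ) by ring]
      rw [← Real.rpow_natCast (t+r) 2, ← Real.rpow_mul htr.le]
      norm_num
      ring_nf
    calc T n m k r t
        ≤ (t+r) ^ (2*k+1-m : ℕ) * ((t+r)^2/2) ^ (-(((n:ℝ)+1)/2) - (k:ℝ)) := by
          unfold T
          apply mul_le_mul h1 h2 (Real.rpow_pos_of_pos hu _).le (by positivity)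
      _ = 2 ^ (((n:ℝ)+1)/2 + (k:ℝ)) * (t+r) ^ (-((n:ℝ)+(m:ℝ))) := by
          rw [e2, ← Real.rpow_natCast (t+r) (2*k+1-m)]
          rw [show (t+r) ^ (((2*k+1-m:ℕ)):ℝ) *
              (2 ^ (((n:ℝ)+1)/2 + (k:ℝ)) * (t+r) ^ (2*(-(((n:ℝ)+1)/2) - (k:ℝ))))
            = 2 ^ (((n:ℝ)+1)/2 + (k:ℝ)) *
              ((t+r) ^ (((2*k+1-m:ℕ)):ℝ) * (t+r) ^ (2*(-(((n:ℝ)+1)/2) - (k:ℝ)))) by ring]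
          rw [← Real.rpow_add htr]
          congr 1
          have : ((2*k+1-m : ℕ) : ℝ) = 2*(k:ℝ)+1-(m:ℝ) := by
            push_cast [hm]
            ring
          rw [this]
          ring

lemma iteratedDeriv_const_mul' (A : ℝ) (f : ℝ → ℝ) (m : ℕ) :
    ∀ t, iteratedDeriv m (fun s => A * f s) t = A * iteratedDeriv m f t := by
  induction m with
  | zero => intro t; simp
  | succ m ih =>
    intro t
    rw [iteratedDeriv_succ, iteratedDeriv_succ]
    have : iteratedDeriv m (fun s => A * f s) = fun s => A * iteratedDeriv m f s :=
      funext ih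
    rw [this, deriv_const_mul_field]

lemma exists_deriv_bound (n m : ℕ) : ∃ C : ℝ, 0 < C ∧
    ∀ (x : EuclideanSpace ℝ (Fin n)) (t : ℝ), 0 < t →
      |iteratedDeriv m (fun r => halfSpacePoissonKernel n r x) t|
        ≤ C * (t + ‖x‖) ^ (-((n:ℝ)+(m:ℝ))) := by
  set A : ℝ := Real.Gamma (((n : ℝ) + 1) / 2) / Real.pi ^ (((n : ℝ) + 1) / 2) with hA
  set B : ℝ := ∑ k ∈ Finset.range (m+1), |c n m k| * 2 ^ (((n:ℝ)+1)/2 + (k:ℝ)) with hB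
  refine ⟨|A| * B + 1, by positivity, ?_⟩
  intro x t ht
  have hrep : (fun r => halfSpacePoissonKernel n r x) = fun r => A * phi n (‖x‖) r := rfl
  rw [hrep, iteratedDeriv_const_mul' A (phi n ‖x‖) m t, abs_mul]
  rw [iteratedDeriv_phi n (‖x‖) m ht]
  have hX : 0 < (t + ‖x‖) ^ (-((n:ℝ)+(m:ℝ))) :=
    Real.rpow_pos_of_pos (by positivity) _
  calc |A| * |∑ k ∈ Finset.range (m+1), c n m k * T n m k (‖x‖) t|
      ≤ |A| * (B * (t + ‖x‖) ^ (-((n:ℝ)+(m:ℝ)))) := by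
        apply mul_le_mul_of_nonneg_left _ (abs_nonneg _)
        calc |∑ k ∈ Finset.range (m+1), c n m k * T n m k (‖x‖) t|
            ≤ ∑ k ∈ Finset.range (m+1), |c n m k * T n m k (‖x‖) t| :=
              Finset.abs_sum_le_sum_abs _ _
          _ ≤ ∑ k ∈ Finset.range (m+1),
                |c n m k| * 2 ^ (((n:ℝ)+1)/2 + (k:ℝ)) * (t + ‖x‖) ^ (-((n:ℝ)+(m:ℝ))) :=
              Finset.sum_le_sum fun k _ => abs_term_le n m k (norm_nonneg x) ht
          _ = B * (t + ‖x‖) ^ (-((n:ℝ)+(m:ℝ))) := by rw [hB, Finset.sum_mul]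
    _ ≤ (|A| * B + 1) * (t + ‖x‖) ^ (-((n:ℝ)+(m:ℝ))) := by nlinarith [abs_nonneg A, hX]

lemma mOf_sub_pos {α : ℝ} : 0 < (mOf α : ℝ) - α := by
  have := Nat.lt_floor_add_one α
  simp only [mOf]
  push_cast
  linarith

lemma mOf_sub_le_one {α : ℝ} (hα : 0 ≤ α) : (mOf α : ℝ) - α ≤ 1 := by
  have := Nat.floor_le hα
  simp only [mOf]
  push_cast
  linarith

lemma abs_fracKernel (n : ℕ) (α : ℝ) (t : ℝ) (w : EuclideanSpace ℝ (Fin n)) :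
    ‖fracKernel n α t w‖
      = (1 / Real.Gamma ((mOf α : ℝ) - α)) *
        |∫ s in Ioi (0:ℝ),
          iteratedDeriv (mOf α) (fun r => halfSpacePoissonKernel n r w) (t + s)
            * s ^ ((mOf α : ℝ) - α - 1)| := by
  unfold fracKernel
  rw [norm_mul, norm_div, Complex.norm_exp]
  have h1 : ((↑(-(Real.pi * ((mOf α : ℝ) - α))) : ℂ) * Complex.I).re = 0 := by
    simp
  rw [h1, Real.exp_zero]
  simp only [Complex.norm_real, Real.norm_eq_abs]
  rw [abs_of_nonneg (Real.Gamma_nonneg_of_nonneg mOf_sub_pos.le)]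

lemma fracKernel_bound (n : ℕ) (α : ℝ) (hα : 0 < α) : ∃ K : ℝ, 0 < K ∧
    ∀ (t : ℝ) (w : EuclideanSpace ℝ (Fin n)), 0 < t →
      ‖fracKernel n α t w‖ ≤ K * (t + ‖w‖) ^ (-((n:ℝ)+α)) := by
  obtain ⟨C, hC, hbd⟩ := exists_deriv_bound n (mOf α)
  set m := mOf α with hm
  set γ : ℝ := (m : ℝ) - α with hγ
  have hγ0 : 0 < γ := mOf_sub_pos
  have hΓ : 0 < Real.Gamma γ := Real.Gamma_pos_of_pos hγ0
  have hnα : 0 < (n:ℝ) + α := by positivity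
  refine ⟨(1 / Real.Gamma γ) * (C/γ + C/((n:ℝ)+α)), by positivity, ?_⟩
  intro t w ht
  set R : ℝ := t + ‖w‖ with hR
  have hR0 : 0 < R := by have := norm_nonneg w; simp only [hR]; linarith
  rw [abs_fracKernel]
  rw [mul_assoc]
  apply mul_le_mul_of_nonneg_left _ (by positivity)
  set F : ℝ → ℝ := fun s =>
    iteratedDeriv m (fun r => halfSpacePoissonKernel n r w) (t + s) * s ^ (γ - 1) with hF
  -- measurability
  have hg : Measurable (iteratedDeriv m (fun r => halfSpacePoissonKernel n r w)) := by
    rw [hm, mOf, iteratedDeriv_succ]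
    exact measurable_deriv _
  have hgm : Measurable fun s : ℝ =>
      iteratedDeriv m (fun r => halfSpacePoissonKernel n r w) (t + s) :=
    hg.comp (measurable_const.add measurable_id)
  have hFmeas : ∀ (S : Set ℝ), MeasurableSet S → S ⊆ Ioi 0 →
      AEStronglyMeasurable F (volume.restrict S) := by
    intro S hS hSsub
    apply AEStronglyMeasurable.mul (hgm.aestronglyMeasurable)
    apply ContinuousOn.aestronglyMeasurable _ hS
    apply ContinuousOn.rpow_const continuousOn_id
    intro s hs
    exact Or.inl (ne_of_gt (hSsub hs))
  -- pointwise bound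
  have hptw : ∀ s : ℝ, 0 < s →
      |F s| ≤ C * ((t + s) + ‖w‖) ^ (-((n:ℝ)+(m:ℝ))) * s ^ (γ - 1) := by
    intro s hs
    rw [hF, abs_mul, abs_of_nonneg (Real.rpow_nonneg hs.le _)]
    exact mul_le_mul_of_nonneg_right (hbd w (t+s) (by linarith))
      (Real.rpow_nonneg hs.le _)
  have hmexp : -((n:ℝ)+(m:ℝ)) ≤ 0 := by
    have : (0:ℝ) ≤ (n:ℝ)+(m:ℝ) := by positivity
    linarith
  -- majorant on Ioc 0 R
  have hmaj1 : ∀ s ∈ Ioc (0:ℝ) R, |F s| ≤ C * R ^ (-((n:ℝ)+(m:ℝ))) * s ^ (γ - 1) := by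
    intro s hs
    refine (hptw s hs.1).trans ?_
    apply mul_le_mul_of_nonneg_right _ (Real.rpow_nonneg hs.1.le _)
    apply mul_le_mul_of_nonneg_left _ hC.le
    apply Real.rpow_le_rpow_of_nonpos hR0 _ hmexp
    simp only [hR]
    linarith [hs.1.le]
  have hint1 : IntegrableOn (fun s => C * R ^ (-((n:ℝ)+(m:ℝ))) * s ^ (γ - 1))
      (Ioc (0:ℝ) R) := by
    rw [← intervalIntegrable_iff_integrableOn_Ioc_of_le hR0.le]
    exact (intervalIntegral.intervalIntegrable_rpow' (by linarith)).const_mul _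
  -- majorant on Ioi R
  have hmaj2 : ∀ s ∈ Ioi R, |F s| ≤ C * s ^ (-((n:ℝ)+α) - 1) := by
    intro s hs
    have hsR : R < s := hs
    have hs0 : 0 < s := hR0.trans hsR
    refine (hptw s hs0).trans ?_
    have h1 : ((t + s) + ‖w‖) ^ (-((n:ℝ)+(m:ℝ))) ≤ s ^ (-((n:ℝ)+(m:ℝ))) := by
      apply Real.rpow_le_rpow_of_nonpos hs0 _ hmexp
      have := norm_nonneg w
      linarith
    calc C * ((t + s) + ‖w‖) ^ (-((n:ℝ)+(m:ℝ))) * s ^ (γ - 1)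
        ≤ C * s ^ (-((n:ℝ)+(m:ℝ))) * s ^ (γ - 1) := by
          apply mul_le_mul_of_nonneg_right _ (Real.rpow_nonneg hs0.le _)
          exact mul_le_mul_of_nonneg_left h1 hC.le
      _ = C * s ^ (-((n:ℝ)+α) - 1) := by
          rw [mul_assoc, ← Real.rpow_add hs0]
          congr 2
          rw [hγ]
          ring
  have hint2 : IntegrableOn (fun s => C * s ^ (-((n:ℝ)+α) - 1)) (Ioi R) := by
    exact (integrableOn_Ioi_rpow_of_lt (by linarith) hR0).const_mul C
  -- |F| integrable on the pieces
  have hiF1 : IntegrableOn (fun s => |F s|) (Ioc (0:ℝ) R) := by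
    apply Integrable.mono' hint1
      ((hFmeas _ measurableSet_Ioc (Ioc_subset_Ioi_self)).norm.congr ?_)
      ((ae_restrict_iff' measurableSet_Ioc).2 (ae_of_all _ fun s hs => by
        rw [Real.norm_eq_abs, abs_abs]; exact hmaj1 s hs))
    filter_upwards with s
    rw [Real.norm_eq_abs]
  have hiF2 : IntegrableOn (fun s => |F s|) (Ioi R) := by
    apply Integrable.mono' hint2
      ((hFmeas _ measurableSet_Ioi (Ioi_subset_Ioi hR0.le)).norm.congr ?_)
      ((ae_restrict_iff' measurableSet_Ioi).2 (ae_of_all _ fun s hs => by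
        rw [Real.norm_eq_abs, abs_abs]; exact hmaj2 s hs))
    filter_upwards with s
    rw [Real.norm_eq_abs]
  -- split the integral
  have hsplit : ∫ s in Ioi (0:ℝ), |F s|
      = (∫ s in Ioc (0:ℝ) R, |F s|) + ∫ s in Ioi R, |F s| := by
    rw [← Ioc_union_Ioi_eq_Ioi hR0.le]
    exact setIntegral_union Ioc_disjoint_Ioi_same measurableSet_Ioi hiF1 hiF2
  have habs : |∫ s in Ioi (0:ℝ), F s| ≤ ∫ s in Ioi (0:ℝ), |F s| := by
    simpa [Real.norm_eq_abs] using
      norm_integral_le_integral_norm (μ := volume.restrict (Ioi (0:ℝ))) F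
  -- compute the majorant integrals
  have hI1 : ∫ s in Ioc (0:ℝ) R, C * R ^ (-((n:ℝ)+(m:ℝ))) * s ^ (γ - 1)
      = C * R ^ (-((n:ℝ)+(m:ℝ))) * (R ^ γ / γ) := by
    rw [MeasureTheory.integral_const_mul, ← intervalIntegral.integral_of_le hR0.le]
    rw [integral_rpow (Or.inl (by linarith))]
    rw [Real.zero_rpow (by linarith : γ - 1 + 1 ≠ 0)]
    congr 1
    rw [sub_add_cancel]
    ring
  have hI2 : ∫ s in Ioi R, C * s ^ (-((n:ℝ)+α) - 1)
      = C * (R ^ (-((n:ℝ)+α)) / ((n:ℝ)+α)) := by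
    rw [MeasureTheory.integral_const_mul]
    rw [integral_Ioi_rpow_of_lt (by linarith) hR0]
    rw [show -((n:ℝ)+α) - 1 + 1 = -((n:ℝ)+α) by ring]
    rw [show -((n:ℝ)+α) = -(((n:ℝ)+α)) from rfl, neg_div_neg_eq]
  have hRpow : R ^ (-((n:ℝ)+(m:ℝ))) * R ^ γ = R ^ (-((n:ℝ)+α)) := by
    rw [← Real.rpow_add hR0]
    congr 1
    rw [hγ]
    ring
  calc |∫ s in Ioi (0:ℝ), F s| ≤ ∫ s in Ioi (0:ℝ), |F s| := habs
    _ = (∫ s in Ioc (0:ℝ) R, |F s|) + ∫ s in Ioi R, |F s| := hsplit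
    _ ≤ (∫ s in Ioc (0:ℝ) R, C * R ^ (-((n:ℝ)+(m:ℝ))) * s ^ (γ - 1))
        + ∫ s in Ioi R, C * s ^ (-((n:ℝ)+α) - 1) := by
        apply add_le_add
        · exact setIntegral_mono_on hiF1 hint1 measurableSet_Ioc hmaj1
        · exact setIntegral_mono_on hiF2 hint2 measurableSet_Ioi hmaj2
    _ = C * R ^ (-((n:ℝ)+(m:ℝ))) * (R ^ γ / γ) + C * (R ^ (-((n:ℝ)+α)) / ((n:ℝ)+α)) := by
        rw [hI1, hI2]
    _ = (C/γ + C/((n:ℝ)+α)) * R ^ (-((n:ℝ)+α)) := by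
        rw [show C * R ^ (-((n:ℝ)+(m:ℝ))) * (R ^ γ / γ)
            = (C/γ) * (R ^ (-((n:ℝ)+(m:ℝ))) * R ^ γ) by ring, hRpow]
        ring

end S8

/-- For `1 < q < ∞` and `α > 0` there is `C = C(n,q,α) > 0` such that for
all `x ≠ z`, `(∬_{Γ(0)} |t^α ∂_t^α p_t(x+y−z)|^q dy dt/t^{n+1})^{1/q} ≤ C |x−z|^{−n}`, where
`Γ(0) = {(y,t) : |y| < t}` is the standard cone with vertex `0`. -/
theorem stmt_8 (n : ℕ) (hn : 1 ≤ n) (q : ℝ) (hq : 1 < q) (α : ℝ) (hα : 0 < α) :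
    ∃ C : ℝ, 0 < C ∧ ∀ x z : EuclideanSpace ℝ (Fin n), x ≠ z →
      (∫⁻ t in Ioi (0 : ℝ), ∫⁻ y in {y : EuclideanSpace ℝ (Fin n) | ‖y‖ < t},
          ENNReal.ofReal
            ((t ^ α * ‖fracKernel n α t (x + y - z)‖) ^ q / t ^ (n + 1))) ^ (1 / q) ≤
        ENNReal.ofReal (C / ‖x - z‖ ^ n) := by
  classical
  obtain ⟨K, hK, hKbd⟩ := S8.fracKernel_bound n α hα
  haveI : Nonempty (Fin n) := ⟨⟨0, hn⟩⟩
  haveI : Nontrivial (EuclideanSpace ℝ (Fin n)) := by infer_instance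
  set B : ℝ≥0∞ := volume (Metric.ball (0 : EuclideanSpace ℝ (Fin n)) 1) with hBdef
  have hBlt : B < ⊤ := measure_ball_lt_top
  set b : ℝ := B.toReal with hbdef
  have hb0 : 0 < b := by
    rw [hbdef]
    apply ENNReal.toReal_pos _ hBlt.ne
    exact (Metric.measure_ball_pos volume 0 one_pos).ne'
  have hBeq : B = ENNReal.ofReal b := (ENNReal.ofReal_toReal hBlt.ne).symm
  have hq0 : (0:ℝ) < q := by linarith
  set e : ℝ := -((n:ℝ) + α) with hedef
  set K2 : ℝ := K * 2 ^ ((n:ℝ) + α) with hK2def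
  have hK2 : 0 < K2 := by positivity
  set M : ℝ := b * K2 ^ q * (1/(α*q) + 1/((n:ℝ)*q)) with hMdef
  have hnq : (0:ℝ) < (n:ℝ) * q := by
    have : (1:ℝ) ≤ (n:ℝ) := by exact_mod_cast hn
    nlinarith
  have hM : 0 < M := by positivity
  refine ⟨M ^ (1/q), Real.rpow_pos_of_pos hM _, ?_⟩
  intro x z hxz
  set d : ℝ := ‖x - z‖ with hddef
  have hd0 : 0 < d := by
    rw [hddef]
    simpa [sub_eq_zero] using hxz
  -- pointwise bound on the cone
  have hptw : ∀ t : ℝ, 0 < t → ∀ y : EuclideanSpace ℝ (Fin n), ‖y‖ < t →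
      (t ^ α * ‖fracKernel n α t (x + y - z)‖) ^ q / t ^ (n + 1)
        ≤ (t ^ α * (K2 * (t+d) ^ e)) ^ q / t ^ (n + 1) := by
    intro t ht y hy
    have habs : ‖fracKernel n α t (x + y - z)‖ ≤ K2 * (t+d) ^ e := by
      have h1 : ‖fracKernel n α t (x + y - z)‖
          ≤ K * (t + ‖x + y - z‖) ^ (-((n:ℝ)+α)) := hKbd t (x+y-z) ht
      have htri : d ≤ ‖x + y - z‖ + ‖y‖ := by
        have : x - z = (x + y - z) - y := by abel
        rw [hddef, this]
        exact norm_sub_le _ _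
      have hge : (t+d)/2 ≤ t + ‖x + y - z‖ := by
        have h2 : d - t ≤ ‖x + y - z‖ := by linarith
        have h3 : (0:ℝ) ≤ ‖x + y - z‖ := norm_nonneg _
        linarith
      have h4 : (t + ‖x + y - z‖) ^ (-((n:ℝ)+α)) ≤ ((t+d)/2) ^ (-((n:ℝ)+α)) := by
        apply Real.rpow_le_rpow_of_nonpos (by positivity) hge
        have : (0:ℝ) ≤ (n:ℝ) + α := by positivity
        linarith
      have h5 : ((t+d)/2 : ℝ) ^ (-((n:ℝ)+α)) = 2 ^ ((n:ℝ)+α) * (t+d) ^ e := by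
        rw [Real.div_rpow (by positivity) (by norm_num : (0:ℝ) ≤ 2)]
        rw [div_eq_mul_inv, ← Real.rpow_neg (by norm_num : (0:ℝ) ≤ 2)]
        rw [show -(-((n:ℝ)+α)) = (n:ℝ)+α by ring, hedef]
        ring
      calc ‖fracKernel n α t (x + y - z)‖
          ≤ K * (t + ‖x + y - z‖) ^ (-((n:ℝ)+α)) := h1
        _ ≤ K * (((t+d)/2) ^ (-((n:ℝ)+α))) := by
            exact mul_le_mul_of_nonneg_left h4 hK.le
        _ = K2 * (t+d) ^ e := by rw [h5, hK2def]; ring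
    have hnum : (t ^ α * ‖fracKernel n α t (x + y - z)‖) ^ q
        ≤ (t ^ α * (K2 * (t+d) ^ e)) ^ q :=
      Real.rpow_le_rpow
        (mul_nonneg (Real.rpow_nonneg ht.le α) (norm_nonneg _))
        (mul_le_mul_of_nonneg_left habs (Real.rpow_nonneg ht.le α)) hq0.le
    rw [div_eq_mul_inv, div_eq_mul_inv]
    exact mul_le_mul_of_nonneg_right hnum (by positivity)
  -- the scalar function W
  set W : ℝ → ℝ := fun t => (t ^ α * (K2 * (t+d) ^ e)) ^ q / t ^ (n + 1) * (t^n * b)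
    with hWdef
  have hWnn : ∀ t : ℝ, 0 < t → 0 ≤ W t := by
    intro t ht
    rw [hWdef]
    have h1 : (0:ℝ) ≤ t ^ α := Real.rpow_nonneg ht.le _
    have h2 : (0:ℝ) ≤ (t+d) ^ e := Real.rpow_nonneg (by positivity) _
    positivity
  have hW : ∀ t : ℝ, 0 < t →
      W t = (b * K2 ^ q) * (t ^ (α*q - 1) * (t+d) ^ (e*q)) := by
    intro t ht
    have htd : (0:ℝ) < t + d := by linarith
    simp only [hWdef]
    have h1 : (t ^ α * (K2 * (t+d) ^ e)) ^ q = t ^ (α*q) * K2 ^ q * (t+d) ^ (e*q) := by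
      rw [Real.mul_rpow (Real.rpow_nonneg ht.le _) (by positivity),
          Real.mul_rpow hK2.le (Real.rpow_nonneg htd.le _),
          ← Real.rpow_mul ht.le, ← Real.rpow_mul htd.le]
      ring
    rw [h1]
    have h2 : t ^ (α*q) / t ^ (n+1) * t ^ n = t ^ (α*q - 1) := by
      rw [(Real.rpow_natCast t (n+1)).symm, (Real.rpow_natCast t n).symm,
        div_mul_eq_mul_div, ← Real.rpow_add ht, ← Real.rpow_sub ht]
      congr 1
      push_cast
      ring
    rw [show t ^ (α*q) * K2 ^ q * (t+d) ^ (e*q) / t ^ (n+1) * (t ^ n * b)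
        = (t ^ (α*q) / t ^ (n+1) * t ^ n) * (K2 ^ q * ((t+d) ^ (e*q) * b)) by ring,
      h2]
    ring
  -- step A : bound the double integral by a single integral
  have stepA : (∫⁻ t in Ioi (0 : ℝ), ∫⁻ y in {y : EuclideanSpace ℝ (Fin n) | ‖y‖ < t},
        ENNReal.ofReal
          ((t ^ α * ‖fracKernel n α t (x + y - z)‖) ^ q / t ^ (n + 1)))
      ≤ ∫⁻ t in Ioi (0:ℝ), ENNReal.ofReal (W t) := by
    apply setLIntegral_mono' measurableSet_Ioi
    intro t ht
    have ht : (0:ℝ) < t := ht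
    have hset : {y : EuclideanSpace ℝ (Fin n) | ‖y‖ < t} = Metric.ball (0 : EuclideanSpace ℝ (Fin n)) t := by
      ext y
      simp [mem_ball_zero_iff]
    calc ∫⁻ y in {y : EuclideanSpace ℝ (Fin n) | ‖y‖ < t},
          ENNReal.ofReal
            ((t ^ α * ‖fracKernel n α t (x + y - z)‖) ^ q / t ^ (n + 1))
        ≤ ∫⁻ _y in {y : EuclideanSpace ℝ (Fin n) | ‖y‖ < t},
            ENNReal.ofReal ((t ^ α * (K2 * (t+d) ^ e)) ^ q / t ^ (n + 1)) := by
          apply setLIntegral_mono' (by rw [hset]; exact Metric.isOpen_ball.measurableSet)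
          intro y hy
          exact ENNReal.ofReal_le_ofReal (hptw t ht y hy)
      _ = ENNReal.ofReal ((t ^ α * (K2 * (t+d) ^ e)) ^ q / t ^ (n + 1))
            * volume {y : EuclideanSpace ℝ (Fin n) | ‖y‖ < t} := setLIntegral_const _ _
      _ ≤ ENNReal.ofReal (W t) := by
          rw [hset, Measure.addHaar_ball (μ := volume) (0 : EuclideanSpace ℝ (Fin n)) ht.le, finrank_euclideanSpace_fin, ← hBdef, hBeq]
          have hnn : (0:ℝ) ≤ (t ^ α * (K2 * (t+d) ^ e)) ^ q / t ^ (n + 1) := by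
            have h1 : (0:ℝ) ≤ t ^ α := Real.rpow_nonneg ht.le _
            have h2 : (0:ℝ) ≤ (t+d) ^ e := Real.rpow_nonneg (by positivity) _
            positivity
          rw [← ENNReal.ofReal_mul (by positivity), ← ENNReal.ofReal_mul hnn]
  -- step B : bound the single integral
  have hαq1 : (-1:ℝ) < α*q - 1 := by nlinarith
  have hmaj1 : ∀ t ∈ Ioc (0:ℝ) d, W t ≤ (b * K2 ^ q) * d ^ (e*q) * t ^ (α*q - 1) := by
    intro t htd
    rw [hW t htd.1]
    have h1 : (t+d) ^ (e*q) ≤ d ^ (e*q) := by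
      apply Real.rpow_le_rpow_of_nonpos hd0 (by linarith [htd.1.le])
      have : (0:ℝ) ≤ ((n:ℝ)+α)*q := by positivity
      simp only [hedef]
      nlinarith
    calc (b * K2 ^ q) * (t ^ (α*q - 1) * (t+d) ^ (e*q))
        ≤ (b * K2 ^ q) * (t ^ (α*q - 1) * d ^ (e*q)) := by
          apply mul_le_mul_of_nonneg_left _ (by positivity)
          exact mul_le_mul_of_nonneg_left h1 (Real.rpow_nonneg htd.1.le _)
      _ = (b * K2 ^ q) * d ^ (e*q) * t ^ (α*q - 1) := by ring
  have hmaj2 : ∀ t ∈ Ioi d, W t ≤ (b * K2 ^ q) * t ^ (-((n:ℝ)*q) - 1) := by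
    intro t htd
    have htd' : d < t := htd
    have ht : (0:ℝ) < t := hd0.trans htd'
    rw [hW t ht]
    have h1 : (t+d) ^ (e*q) ≤ t ^ (e*q) := by
      apply Real.rpow_le_rpow_of_nonpos ht (by linarith)
      have : (0:ℝ) ≤ ((n:ℝ)+α)*q := by positivity
      simp only [hedef]
      nlinarith
    calc (b * K2 ^ q) * (t ^ (α*q - 1) * (t+d) ^ (e*q))
        ≤ (b * K2 ^ q) * (t ^ (α*q - 1) * t ^ (e*q)) := by
          apply mul_le_mul_of_nonneg_left _ (by positivity)
          exact mul_le_mul_of_nonneg_left h1 (Real.rpow_nonneg ht.le _)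
      _ = (b * K2 ^ q) * t ^ (-((n:ℝ)*q) - 1) := by
          rw [← Real.rpow_add ht]
          rw [show α * q - 1 + e * q = -((n:ℝ)*q) - 1 from by simp only [hedef]; ring]
  have hint1 : IntegrableOn (fun t => (b * K2 ^ q) * d ^ (e*q) * t ^ (α*q - 1))
      (Ioc (0:ℝ) d) := by
    rw [← intervalIntegrable_iff_integrableOn_Ioc_of_le hd0.le]
    exact (intervalIntegral.intervalIntegrable_rpow' hαq1).const_mul _
  have hint2 : IntegrableOn (fun t => (b * K2 ^ q) * t ^ (-((n:ℝ)*q) - 1)) (Ioi d) := by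
    exact (integrableOn_Ioi_rpow_of_lt (by linarith) hd0).const_mul _
  have hI1 : ∫ t in Ioc (0:ℝ) d, (b * K2 ^ q) * d ^ (e*q) * t ^ (α*q - 1)
      = (b * K2 ^ q) * d ^ (e*q) * (d ^ (α*q) / (α*q)) := by
    rw [MeasureTheory.integral_const_mul, ← intervalIntegral.integral_of_le hd0.le]
    rw [integral_rpow (Or.inl hαq1)]
    rw [Real.zero_rpow (by nlinarith : α*q - 1 + 1 ≠ 0)]
    congr 1
    rw [sub_add_cancel]
    ring
  have hI2 : ∫ t in Ioi d, (b * K2 ^ q) * t ^ (-((n:ℝ)*q) - 1)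
      = (b * K2 ^ q) * (d ^ (-((n:ℝ)*q)) / ((n:ℝ)*q)) := by
    rw [MeasureTheory.integral_const_mul]
    rw [integral_Ioi_rpow_of_lt (by linarith) hd0]
    rw [show -((n:ℝ)*q) - 1 + 1 = -((n:ℝ)*q) by ring]
    rw [show -((n:ℝ)*q) = -(((n:ℝ)*q)) from rfl, neg_div_neg_eq]
  have stepB : (∫⁻ t in Ioi (0:ℝ), ENNReal.ofReal (W t))
      ≤ ENNReal.ofReal (M * d ^ (-((n:ℝ)*q))) := by
    rw [← Ioc_union_Ioi_eq_Ioi hd0.le]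
    rw [lintegral_union measurableSet_Ioi Ioc_disjoint_Ioi_same]
    have p1 : (∫⁻ t in Ioc (0:ℝ) d, ENNReal.ofReal (W t))
        ≤ ENNReal.ofReal ((b * K2 ^ q) * d ^ (e*q) * (d ^ (α*q) / (α*q))) := by
      calc (∫⁻ t in Ioc (0:ℝ) d, ENNReal.ofReal (W t))
          ≤ ∫⁻ t in Ioc (0:ℝ) d,
              ENNReal.ofReal ((b * K2 ^ q) * d ^ (e*q) * t ^ (α*q - 1)) :=
            setLIntegral_mono' measurableSet_Ioc fun t ht =>
              ENNReal.ofReal_le_ofReal (hmaj1 t ht)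
        _ = ENNReal.ofReal (∫ t in Ioc (0:ℝ) d, (b * K2 ^ q) * d ^ (e*q) * t ^ (α*q - 1)) :=
            (MeasureTheory.ofReal_integral_eq_lintegral_ofReal hint1
              ((ae_restrict_iff' measurableSet_Ioc).2 (ae_of_all _ fun t ht => by
                have h1 : (0:ℝ) ≤ t ^ (α*q-1) := Real.rpow_nonneg ht.1.le _
                have h2 : (0:ℝ) ≤ d ^ (e*q) := Real.rpow_nonneg hd0.le _
                positivity))).symm
        _ = ENNReal.ofReal ((b * K2 ^ q) * d ^ (e*q) * (d ^ (α*q) / (α*q))) := by rw [hI1]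
    have p2 : (∫⁻ t in Ioi d, ENNReal.ofReal (W t))
        ≤ ENNReal.ofReal ((b * K2 ^ q) * (d ^ (-((n:ℝ)*q)) / ((n:ℝ)*q))) := by
      calc (∫⁻ t in Ioi d, ENNReal.ofReal (W t))
          ≤ ∫⁻ t in Ioi d, ENNReal.ofReal ((b * K2 ^ q) * t ^ (-((n:ℝ)*q) - 1)) :=
            setLIntegral_mono' measurableSet_Ioi fun t ht =>
              ENNReal.ofReal_le_ofReal (hmaj2 t ht)
        _ = ENNReal.ofReal (∫ t in Ioi d, (b * K2 ^ q) * t ^ (-((n:ℝ)*q) - 1)) :=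
            (MeasureTheory.ofReal_integral_eq_lintegral_ofReal hint2
              ((ae_restrict_iff' measurableSet_Ioi).2 (ae_of_all _ fun t ht => by
                have ht0 : (0:ℝ) < t := hd0.trans ht
                have h1 : (0:ℝ) ≤ t ^ (-((n:ℝ)*q)-1) := Real.rpow_nonneg ht0.le _
                positivity))).symm
        _ = ENNReal.ofReal ((b * K2 ^ q) * (d ^ (-((n:ℝ)*q)) / ((n:ℝ)*q))) := by rw [hI2]
    have ha1 : (b * K2 ^ q) * d ^ (e*q) * (d ^ (α*q) / (α*q))
        = (b * K2 ^ q) * (1/(α*q)) * d ^ (-((n:ℝ)*q)) := by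
      rw [show (b * K2 ^ q) * d ^ (e*q) * (d ^ (α*q) / (α*q))
          = (b * K2 ^ q) * (1/(α*q)) * (d ^ (e*q) * d ^ (α*q)) by ring]
      rw [← Real.rpow_add hd0]
      rw [show e*q + α*q = -((n:ℝ)*q) by simp only [hedef]; ring]
    have ha2 : (b * K2 ^ q) * (d ^ (-((n:ℝ)*q)) / ((n:ℝ)*q))
        = (b * K2 ^ q) * (1/((n:ℝ)*q)) * d ^ (-((n:ℝ)*q)) := by ring
    calc (∫⁻ t in Ioc (0:ℝ) d, ENNReal.ofReal (W t))
          + ∫⁻ t in Ioi d, ENNReal.ofReal (W t)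
        ≤ ENNReal.ofReal ((b * K2 ^ q) * d ^ (e*q) * (d ^ (α*q) / (α*q)))
          + ENNReal.ofReal ((b * K2 ^ q) * (d ^ (-((n:ℝ)*q)) / ((n:ℝ)*q))) :=
          add_le_add p1 p2
      _ = ENNReal.ofReal (M * d ^ (-((n:ℝ)*q))) := by
          rw [ha1, ha2, ← ENNReal.ofReal_add (by positivity) (by positivity)]
          congr 1
          rw [hMdef]
          ring
  -- conclusion
  have hfin : ((ENNReal.ofReal (M * d ^ (-((n:ℝ)*q)))) : ℝ≥0∞) ^ (1/q)
      = ENNReal.ofReal (M ^ (1/q) / d ^ n) := by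
    rw [ENNReal.ofReal_rpow_of_pos (by positivity)]
    congr 1
    rw [Real.mul_rpow hM.le (Real.rpow_nonneg hd0.le _)]
    rw [← Real.rpow_natCast d n, ← Real.rpow_mul hd0.le]
    rw [show (-((n:ℝ)*q))*(1/q) = -((n:ℝ)) from by field_simp]
    rw [Real.rpow_neg hd0.le]
    ring
  calc (∫⁻ t in Ioi (0 : ℝ), ∫⁻ y in {y : EuclideanSpace ℝ (Fin n) | ‖y‖ < t},
        ENNReal.ofReal
          ((t ^ α * ‖fracKernel n α t (x + y - z)‖) ^ q / t ^ (n + 1))) ^ (1 / q)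
      ≤ (ENNReal.ofReal (M * d ^ (-((n:ℝ)*q)))) ^ (1/q) :=
        ENNReal.rpow_le_rpow (stepA.trans stepB) (by positivity)
    _ = ENNReal.ofReal (M ^ (1/q) / d ^ n) := hfin
end
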